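/- arXiv:2409.03539 — 4 statements merged into one kernel-verified Lean document; each statement's English description precedes it below -/
import Mathlib

section
/- Let G be an abelian subgroup of the symmetric group S_n, and suppose G is isomorphic to a direct product C_{q_1} × ⋯ × C_{q_k} of cyclic groups where each q_i > 1 is a prime power. Then q_1 + ⋯ + q_k ≤ n. -/
open Finset Function

lemma card_nsmul_zero_zmod (u q : ℕ) (hq : q ≠ 0) :
    Nat.card {x : ZMod q // u • x = 0} = Nat.gcd u q := by
  haveI : NeZero q := ⟨hq⟩
  set φ : ZMod q →+ ZMod q := AddMonoidHom.mulLeft (u : ZMod q) with hφ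
  have hker : ∀ x : ZMod q, u • x = 0 ↔ φ x = 0 := by
    intro x
    simp [hφ, AddMonoidHom.mulLeft, nsmul_eq_mul]
  have h1 : Nat.card {x : ZMod q // u • x = 0} = Nat.card φ.ker := by
    apply Nat.card_congr (Equiv.subtypeEquivRight _)
    intro x; simpa [AddMonoidHom.mem_ker] using hker x
  have hrange : φ.range = AddSubgroup.zmultiples (u : ZMod q) := by
    ext y
    constructor
    · rintro ⟨x, rfl⟩
      refine ⟨(x.val : ℤ), ?_⟩
      push_cast [zsmul_eq_mul]
      rw [ZMod.natCast_val, ZMod.cast_id, mul_comm]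
      rfl
    · rintro ⟨m, rfl⟩
      exact ⟨(m : ZMod q), by simp [hφ, AddMonoidHom.mulLeft, zsmul_eq_mul, mul_comm]⟩
  have h2 : Nat.card φ.range = q / q.gcd u := by
    rw [hrange, Nat.card_zmultiples, ZMod.addOrderOf_coe u hq]
  have h3 : Nat.card (ZMod q) = Nat.card (ZMod q ⧸ φ.ker) * Nat.card φ.ker :=
    AddSubgroup.card_eq_card_quotient_mul_card_addSubgroup _
  have h4 : Nat.card (ZMod q ⧸ φ.ker) = q / q.gcd u := by
    rw [Nat.card_congr (QuotientAddGroup.quotientKerEquivRange φ).toEquiv, h2]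
  rw [Nat.card_zmod] at h3
  rw [h1]
  have hgdvd : q.gcd u ∣ q := Nat.gcd_dvd_left q u
  have hgpos : 0 < q.gcd u := Nat.gcd_pos_of_pos_left u (Nat.pos_of_ne_zero hq)
  have hdpos : 0 < q / q.gcd u := Nat.div_pos (Nat.le_of_dvd (Nat.pos_of_ne_zero hq) hgdvd) hgpos
  rw [h4] at h3
  rw [Nat.gcd_comm]
  refine (Nat.eq_of_mul_eq_mul_left hdpos ?_).symm
  rw [Nat.div_mul_cancel hgdvd]
  exact h3

def torsionSub (M : Type*) [CommGroup M] (u : ℕ) : Subgroup M where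
  carrier := {x | x ^ u = 1}
  one_mem' := one_pow u
  mul_mem' := fun {a b} ha hb => by
    simp only [Set.mem_setOf_eq] at *
    rw [mul_pow, ha, hb, one_mul]
  inv_mem' := fun {a} ha => by
    simp only [Set.mem_setOf_eq] at *
    rw [inv_pow, ha, inv_one]

lemma mem_torsionSub {M : Type*} [CommGroup M] {u : ℕ} {x : M} :
    x ∈ torsionSub M u ↔ x ^ u = 1 := Iff.rfl

lemma card_torsionSub_zmod (u q : ℕ) (hq : q ≠ 0) :
    Nat.card (torsionSub (Multiplicative (ZMod q)) u) = Nat.gcd u q := by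
  rw [← card_nsmul_zero_zmod u q hq]
  apply Nat.card_congr
  refine Equiv.subtypeEquiv (Multiplicative.toAdd) ?_
  intro x
  rw [mem_torsionSub]
  constructor
  · intro h
    rw [← toAdd_pow, h]
    rfl
  · intro h
    have : Multiplicative.toAdd (x ^ u) = Multiplicative.toAdd 1 := by
      rw [toAdd_pow, h]; rfl
    exact Multiplicative.toAdd.injective this

lemma card_torsionSub_pi {ι : Type*} [Fintype ι] (M : ι → Type*) [∀ i, CommGroup (M i)] (u : ℕ) :
    Nat.card (torsionSub ((i : ι) → M i) u) = ∏ i, Nat.card (torsionSub (M i) u) := by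
  rw [← Nat.card_pi]
  apply Nat.card_congr
  refine (Equiv.subtypeEquivRight ?_).trans (Equiv.subtypePiEquivPi)
  intro x
  rw [mem_torsionSub, funext_iff]
  simp only [Pi.pow_apply, Pi.one_apply]
  rfl

lemma torsionSub_le (M : Type*) [CommGroup M] (u v : ℕ) :
    torsionSub M u ≤ torsionSub M (u * v) := by
  intro x hx
  rw [mem_torsionSub] at *
  rw [pow_mul, hx, one_pow]

lemma gcd_pow_same (p a b : ℕ) : Nat.gcd (p ^ a) (p ^ b) = p ^ min a b := by
  rcases le_total a b with h | h
  · rw [min_eq_left h, Nat.gcd_eq_left (pow_dvd_pow p h)]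
  · rw [min_eq_right h, Nat.gcd_eq_right (pow_dvd_pow p h)]

lemma gcd_primepow_step {p t Q : ℕ} (hp : p.Prime) (hQ : IsPrimePow Q) :
    Nat.gcd (p ^ (t + 1)) Q = Nat.gcd (p ^ t) Q * (if p ^ (t + 1) ∣ Q then p else 1) := by
  obtain ⟨P, E, hP, hE, rfl⟩ := hQ
  rw [← Nat.prime_iff] at hP
  by_cases hpp : p = P
  · subst hpp
    rw [gcd_pow_same, gcd_pow_same]
    by_cases h : t + 1 ≤ E
    · rw [if_pos (pow_dvd_pow p h), min_eq_left h, min_eq_left (by omega), pow_succ]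
    · rw [if_neg (fun hd => h ((Nat.pow_dvd_pow_iff_le_right hp.one_lt).mp hd)),
        min_eq_right (by omega), min_eq_right (by omega), mul_one]
  · have hcop : Nat.Coprime p (P ^ E) :=
      (Nat.Coprime.pow_right E ((Nat.coprime_primes hp hP).mpr hpp))
    have h1 : Nat.gcd (p ^ (t + 1)) (P ^ E) = 1 := Nat.Coprime.pow_left (t + 1) hcop
    have h2 : Nat.gcd (p ^ t) (P ^ E) = 1 := Nat.Coprime.pow_left t hcop
    have hnd : ¬ p ^ (t + 1) ∣ P ^ E := by
      intro hd
      exact hpp ((Nat.prime_dvd_prime_iff_eq hp hP).mp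
        (hp.dvd_of_dvd_pow (dvd_trans (dvd_pow_self p (Nat.succ_ne_zero t)) hd)))
    rw [h1, h2, if_neg hnd, mul_one]

lemma card_torsion_pi_zmod {ι : Type*} [Fintype ι] (q : ι → ℕ) (h0 : ∀ i, q i ≠ 0) (u : ℕ) :
    Nat.card (torsionSub ((i : ι) → Multiplicative (ZMod (q i))) u) = ∏ i, Nat.gcd u (q i) := by
  rw [card_torsionSub_pi]
  exact Finset.prod_congr rfl fun i _ => card_torsionSub_zmod u (q i) (h0 i)

lemma card_quot_mono {A B : Type*} [CommGroup A] [CommGroup B] [Finite A] [Finite B]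
    (f : A →* B) (hf : Function.Injective f) (u v : ℕ) :
    Nat.card (torsionSub A (u * v)) * Nat.card (torsionSub B u) ≤
      Nat.card (torsionSub B (u * v)) * Nat.card (torsionSub A u) := by
  have hAle : torsionSub A u ≤ torsionSub A (u * v) := torsionSub_le A u v
  have hBle : torsionSub B u ≤ torsionSub B (u * v) := torsionSub_le B u v
  have hres : ∀ x : torsionSub A (u * v), f x ∈ torsionSub B (u * v) := by
    intro x
    rw [mem_torsionSub, ← map_pow, (mem_torsionSub.mp x.2 : _), map_one]
  let F0 : torsionSub A (u * v) →* torsionSub B (u * v) :=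
    (f.comp (torsionSub A (u * v)).subtype).codRestrict _ hres
  let F : torsionSub A (u * v) →* (torsionSub B (u * v)) ⧸
      ((torsionSub B u).subgroupOf (torsionSub B (u * v))) :=
    (QuotientGroup.mk' _).comp F0
  have hkerF : F.ker = (torsionSub A u).subgroupOf (torsionSub A (u * v)) := by
    ext x
    simp only [F, F0, MonoidHom.mem_ker, MonoidHom.comp_apply, QuotientGroup.mk'_apply,
      QuotientGroup.eq_one_iff, Subgroup.mem_subgroupOf, MonoidHom.codRestrict_apply,
      MonoidHom.comp_apply, Subgroup.coe_subtype]
    rw [mem_torsionSub, mem_torsionSub]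
    constructor
    · intro h
      apply hf
      rw [map_pow, map_one]
      exact h
    · intro h
      show f (x : A) ^ u = 1
      rw [← map_pow, h, map_one]
  have e1 : Nat.card (torsionSub A (u * v)) =
      Nat.card ((torsionSub A (u * v)) ⧸ F.ker) * Nat.card F.ker :=
    Subgroup.card_eq_card_quotient_mul_card_subgroup _
  have e2 : Nat.card (torsionSub B (u * v)) =
      Nat.card ((torsionSub B (u * v)) ⧸ (torsionSub B u).subgroupOf (torsionSub B (u * v))) *
        Nat.card ((torsionSub B u).subgroupOf (torsionSub B (u * v))) :=
    Subgroup.card_eq_card_quotient_mul_card_subgroup _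
  have e3 : Nat.card F.ker = Nat.card (torsionSub A u) := by
    rw [hkerF]
    exact Nat.card_congr (Subgroup.subgroupOfEquivOfLe hAle).toEquiv
  have e4 : Nat.card ((torsionSub B u).subgroupOf (torsionSub B (u * v))) =
      Nat.card (torsionSub B u) :=
    Nat.card_congr (Subgroup.subgroupOfEquivOfLe hBle).toEquiv
  have e5 : Nat.card ((torsionSub A (u * v)) ⧸ F.ker) ≤
      Nat.card ((torsionSub B (u * v)) ⧸ (torsionSub B u).subgroupOf (torsionSub B (u * v))) :=
    Nat.card_le_card_of_injective _ (QuotientGroup.kerLift_injective F)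
  rw [e1, e2, e3, e4]
  calc Nat.card ((torsionSub A (u * v)) ⧸ F.ker) * Nat.card (torsionSub A u) *
        Nat.card (torsionSub B u)
      ≤ Nat.card ((torsionSub B (u * v)) ⧸ (torsionSub B u).subgroupOf (torsionSub B (u * v))) *
        Nat.card (torsionSub A u) * Nat.card (torsionSub B u) := by
        exact Nat.mul_le_mul_right _ (Nat.mul_le_mul_right _ e5)
    _ = _ := by ring

lemma primePow_rank_le {ι κ : Type*} [Fintype ι] [Fintype κ] (q : ι → ℕ) (s : κ → ℕ)
    (hq : ∀ i, IsPrimePow (q i)) (hs : ∀ j, IsPrimePow (s j))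
    (f : ((i : ι) → Multiplicative (ZMod (q i))) →* ((j : κ) → Multiplicative (ZMod (s j))))
    (hf : Function.Injective f) (p t : ℕ) (hp : p.Prime) :
    (univ.filter fun i => p ^ (t + 1) ∣ q i).card ≤
      (univ.filter fun j => p ^ (t + 1) ∣ s j).card := by
  classical
  haveI : ∀ i, NeZero (q i) := fun i => ⟨(hq i).ne_zero⟩
  haveI : ∀ j, NeZero (s j) := fun j => ⟨(hs j).ne_zero⟩
  have key := card_quot_mono f hf (p ^ t) p
  rw [← pow_succ] at key
  rw [card_torsion_pi_zmod q (fun i => (hq i).ne_zero) (p ^ (t + 1)),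
    card_torsion_pi_zmod q (fun i => (hq i).ne_zero) (p ^ t),
    card_torsion_pi_zmod s (fun j => (hs j).ne_zero) (p ^ (t + 1)),
    card_torsion_pi_zmod s (fun j => (hs j).ne_zero) (p ^ t)] at key
  have prodA : (∏ i, Nat.gcd (p ^ (t + 1)) (q i)) =
      (∏ i, Nat.gcd (p ^ t) (q i)) * p ^ (univ.filter fun i => p ^ (t + 1) ∣ q i).card := by
    rw [Finset.prod_congr rfl fun i _ => gcd_primepow_step hp (hq i), Finset.prod_mul_distrib,
      Finset.prod_ite, Finset.prod_const, Finset.prod_const_one, mul_one]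
  have prodB : (∏ j, Nat.gcd (p ^ (t + 1)) (s j)) =
      (∏ j, Nat.gcd (p ^ t) (s j)) * p ^ (univ.filter fun j => p ^ (t + 1) ∣ s j).card := by
    rw [Finset.prod_congr rfl fun j _ => gcd_primepow_step hp (hs j), Finset.prod_mul_distrib,
      Finset.prod_ite, Finset.prod_const, Finset.prod_const_one, mul_one]
  rw [prodA, prodB] at key
  have hApos : 0 < ∏ i, Nat.gcd (p ^ t) (q i) :=
    Finset.prod_pos fun i _ => Nat.gcd_pos_of_pos_right _ (Nat.pos_of_ne_zero (hq i).ne_zero)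
  have hBpos : 0 < ∏ j, Nat.gcd (p ^ t) (s j) :=
    Finset.prod_pos fun j _ => Nat.gcd_pos_of_pos_right _ (Nat.pos_of_ne_zero (hs j).ne_zero)
  have hpow : ((∏ i, Nat.gcd (p ^ t) (q i)) * (∏ j, Nat.gcd (p ^ t) (s j))) *
        p ^ (univ.filter fun i => p ^ (t + 1) ∣ q i).card ≤
      ((∏ i, Nat.gcd (p ^ t) (q i)) * (∏ j, Nat.gcd (p ^ t) (s j))) *
        p ^ (univ.filter fun j => p ^ (t + 1) ∣ s j).card := by
    calc ((∏ i, Nat.gcd (p ^ t) (q i)) * (∏ j, Nat.gcd (p ^ t) (s j))) *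
          p ^ (univ.filter fun i => p ^ (t + 1) ∣ q i).card
        = (∏ i, Nat.gcd (p ^ t) (q i)) * p ^ (univ.filter fun i => p ^ (t + 1) ∣ q i).card *
          (∏ j, Nat.gcd (p ^ t) (s j)) := by ring
      _ ≤ (∏ j, Nat.gcd (p ^ t) (s j)) * p ^ (univ.filter fun j => p ^ (t + 1) ∣ s j).card *
          (∏ i, Nat.gcd (p ^ t) (q i)) := key
      _ = _ := by ring
  exact (Nat.pow_le_pow_iff_right hp.one_lt).mp
    (Nat.le_of_mul_le_mul_left hpow (Nat.mul_pos hApos hBpos))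

def ppWeight (d : ℕ) : ℕ := Nat.totient d + (if d.Prime then 1 else 0)

lemma ppWeight_sum_Icc {p : ℕ} (hp : p.Prime) {e : ℕ} (he : 1 ≤ e) :
    ∑ t ∈ Finset.Icc 1 e, ppWeight (p ^ t) = p ^ e := by
  induction e with
  | zero => omega
  | succ e ih =>
    rcases Nat.lt_or_ge 1 (e + 1) with h | h
    · have he' : 1 ≤ e := by omega
      rw [Finset.sum_Icc_succ_top (by omega : 1 ≤ e + 1), ih he']
      have hnp : ¬ (p ^ (e + 1)).Prime := by
        intro hP
        rcases (Nat.Prime.eq_one_or_self_of_dvd hP p (dvd_pow_self p (Nat.succ_ne_zero e)))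
          with h1 | h2
        · exact hp.one_lt.ne' h1
        · have := Nat.pow_right_injective hp.two_le (h2.symm.trans (pow_one p).symm)
          omega
      rw [ppWeight, if_neg hnp, add_zero, Nat.totient_prime_pow hp (by omega : 0 < e + 1)]
      have h1 : 1 + (p - 1) = p := by have := hp.one_lt; omega
      calc p ^ e + p ^ (e + 1 - 1) * (p - 1) = p ^ e * (1 + (p - 1)) := by
            rw [show e + 1 - 1 = e from rfl]; ring
        _ = p ^ (e + 1) := by rw [h1, pow_succ]
    · obtain rfl : e = 0 := by omega
      rw [show Finset.Icc 1 1 = {1} from rfl, Finset.sum_singleton, pow_one, ppWeight,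
        if_pos hp, Nat.totient_prime hp]
      have := hp.one_lt
      omega

lemma sum_ppWeight_eq {Q N : ℕ} (hQ : IsPrimePow Q) (hN : Q ≤ N) :
    ∑ d ∈ (Finset.Icc 2 N).filter (· ∣ Q), ppWeight d = Q := by
  obtain ⟨p, e, hp, he, rfl⟩ := hQ
  rw [← Nat.prime_iff] at hp
  have hset : (Finset.Icc 2 N).filter (· ∣ p ^ e) = (Finset.Icc 1 e).image (p ^ ·) := by
    ext d
    simp only [Finset.mem_filter, Finset.mem_Icc, Finset.mem_image]
    constructor
    · rintro ⟨⟨h2, hN'⟩, hdvd⟩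
      obtain ⟨t, ht, rfl⟩ := (Nat.dvd_prime_pow hp).mp hdvd
      refine ⟨t, ⟨?_, ht⟩, rfl⟩
      by_contra h
      have : t = 0 := by omega
      subst this
      simp at h2
    · rintro ⟨t, ⟨ht1, hte⟩, rfl⟩
      refine ⟨⟨?_, ?_⟩, pow_dvd_pow p hte⟩
      · calc 2 ≤ p := hp.two_le
          _ = p ^ 1 := (pow_one p).symm
          _ ≤ p ^ t := Nat.pow_le_pow_right hp.pos ht1
      · exact le_trans (Nat.pow_le_pow_right hp.pos hte) hN
  rw [hset, Finset.sum_image (fun a _ b _ h => Nat.pow_right_injective hp.two_le h),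
    ppWeight_sum_Icc hp he]

lemma sum_le_sum_of_embedding {ι κ : Type*} [Fintype ι] [Fintype κ] (q : ι → ℕ) (s : κ → ℕ)
    (hq : ∀ i, IsPrimePow (q i)) (hs : ∀ j, IsPrimePow (s j))
    (f : ((i : ι) → Multiplicative (ZMod (q i))) →* ((j : κ) → Multiplicative (ZMod (s j))))
    (hf : Function.Injective f) : ∑ i, q i ≤ ∑ j, s j := by
  classical
  set N := (∑ i, q i) + (∑ j, s j) with hN
  have hqN : ∀ i, q i ≤ N := fun i =>
    le_trans (Finset.single_le_sum (fun _ _ => Nat.zero_le _) (mem_univ i)) (Nat.le_add_right _ _)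
  have hsN : ∀ j, s j ≤ N := fun j =>
    le_trans (Finset.single_le_sum (fun _ _ => Nat.zero_le _) (mem_univ j)) (Nat.le_add_left _ _)
  calc ∑ i, q i = ∑ i, ∑ d ∈ Finset.Icc 2 N, if d ∣ q i then ppWeight d else 0 := by
        refine Finset.sum_congr rfl fun i _ => ?_
        rw [← Finset.sum_filter, sum_ppWeight_eq (hq i) (hqN i)]
    _ = ∑ d ∈ Finset.Icc 2 N, ∑ i, if d ∣ q i then ppWeight d else 0 := Finset.sum_comm
    _ ≤ ∑ d ∈ Finset.Icc 2 N, ∑ j, if d ∣ s j then ppWeight d else 0 := by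
        refine Finset.sum_le_sum fun d hd => ?_
        by_cases hd0 : ∃ i, d ∣ q i
        · obtain ⟨i0, hi0⟩ := hd0
          obtain ⟨p, e, hp, he, hqi⟩ := hq i0
          rw [← Nat.prime_iff] at hp
          obtain ⟨t, ht, rfl⟩ := (Nat.dvd_prime_pow hp).mp (hqi ▸ hi0)
          have ht1 : 1 ≤ t := by
            by_contra h
            have : t = 0 := by omega
            subst this
            simp only [pow_zero] at hd
            have := (Finset.mem_Icc.mp hd).1
            omega
          obtain ⟨t', rfl⟩ : ∃ t', t = t' + 1 := ⟨t - 1, by omega⟩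
          rw [← Finset.sum_filter, ← Finset.sum_filter, Finset.sum_const, Finset.sum_const,
            smul_eq_mul, smul_eq_mul]
          exact Nat.mul_le_mul_right _ (primePow_rank_le q s hq hs f hf p t' hp)
        · push_neg at hd0
          rw [Finset.sum_eq_zero fun i _ => if_neg (hd0 i)]
          exact Nat.zero_le _
    _ = ∑ j, ∑ d ∈ Finset.Icc 2 N, if d ∣ s j then ppWeight d else 0 := Finset.sum_comm
    _ = ∑ j, s j := by
        refine Finset.sum_congr rfl fun j _ => ?_
        rw [← Finset.sum_filter, sum_ppWeight_eq (hs j) (hsN j)]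

lemma sum_le_prod_of_two_le {ι : Type*} [Fintype ι] (f : ι → ℕ) (hf : ∀ i, 2 ≤ f i) :
    ∑ i, f i ≤ ∏ i, f i := by
  classical
  have H : ∀ s : Finset ι, ∑ i ∈ s, f i ≤ ∏ i ∈ s, f i := by
    intro s
    induction s using Finset.induction_on with
    | empty => simp
    | @insert a s ha ih =>
      rw [Finset.sum_insert ha, Finset.prod_insert ha]
      rcases Finset.eq_empty_or_nonempty s with rfl | ⟨i0, hi0⟩
      · simp
      · have h2 : 2 ≤ ∏ i ∈ s, f i :=
          le_trans (hf i0) (Finset.single_le_prod' (fun i _ => le_trans one_le_two (hf i)) hi0)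
        calc f a + ∑ i ∈ s, f i ≤ f a + ∏ i ∈ s, f i := Nat.add_le_add_left ih _
        _ ≤ f a * ∏ i ∈ s, f i := add_le_mul (hf a) h2
  exact H Finset.univ

lemma commGroup_decomp_primePow (Q : Type*) [CommGroup Q] [Finite Q] :
    ∃ (ι : Type) (_ : Fintype ι) (s : ι → ℕ),
      (∀ i, IsPrimePow (s i)) ∧ Nonempty (Q ≃* ((i : ι) → Multiplicative (ZMod (s i)))) := by
  classical
  obtain ⟨ι, hι, p, hp, e, ⟨h⟩⟩ := AddCommGroup.equiv_directSum_zmod_of_finite (Additive Q)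
  let h3 : Q ≃* ((i : ι) → Multiplicative (ZMod (p i ^ e i))) :=
    MulEquiv.toAdditive.symm <| h.trans <| (DirectSum.addEquivProd _).trans <|
      MulEquiv.toAdditiveRight <| MulEquiv.piMultiplicative _
  let ι' := {i : ι // e i ≠ 0}
  let s : ι' → ℕ := fun i => p i.1 ^ e i.1
  have hsub : ∀ i : ι, e i = 0 → Subsingleton (Multiplicative (ZMod (p i ^ e i))) := by
    intro i hi
    rw [hi, pow_zero]
    infer_instance
  let Φ : ((i : ι) → Multiplicative (ZMod (p i ^ e i))) ≃*
      ((i : ι') → Multiplicative (ZMod (s i))) :=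
    { toFun := fun x i => x i.1
      invFun := fun y i => if h' : e i ≠ 0 then y ⟨i, h'⟩ else 1
      left_inv := by
        intro x
        funext i
        by_cases h' : e i ≠ 0
        · exact dif_pos h'
        · push_neg at h'
          haveI := hsub i h'
          exact Subsingleton.elim _ _
      right_inv := by
        intro y
        funext i
        exact dif_pos i.2
      map_mul' := fun x y => rfl }
  exact ⟨ι', inferInstance, s,
    fun i => ⟨p i.1, e i.1, Nat.prime_iff.mp (hp i.1), Nat.pos_of_ne_zero i.2, rfl⟩,
    ⟨h3.trans Φ⟩⟩

lemma subgroup_decomp {Γ : Type*} [CommGroup Γ] [Finite Γ] (K : Subgroup Γ) :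
    ∃ (ι : Type) (_ : Fintype ι) (s : ι → ℕ)
      (π : (t : ι) → Γ →* Multiplicative (ZMod (s t))),
      (∀ t, IsPrimePow (s t)) ∧ (⨅ t, (π t).ker) = K ∧ (∑ t, s t) ≤ K.index := by
  obtain ⟨ι, hι, s, hps, ⟨φ⟩⟩ := commGroup_decomp_primePow (Γ ⧸ K)
  refine ⟨ι, hι, s,
    fun t => (Pi.evalMonoidHom _ t).comp (φ.toMonoidHom.comp (QuotientGroup.mk' K)),
    hps, ?_, ?_⟩
  · ext g
    simp only [Subgroup.mem_iInf, MonoidHom.mem_ker, MonoidHom.comp_apply,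
      MulEquiv.coe_toMonoidHom, Pi.evalMonoidHom_apply, QuotientGroup.mk'_apply]
    constructor
    · intro hg
      have h1 : φ ((g : Γ ⧸ K)) = 1 := funext hg
      have h2 : ((g : Γ) : Γ ⧸ K) = 1 := by
        apply φ.injective
        rw [h1, map_one]
      exact (QuotientGroup.eq_one_iff g).mp h2
    · intro hg t
      have h2 : ((g : Γ) : Γ ⧸ K) = 1 := (QuotientGroup.eq_one_iff g).mpr hg
      rw [h2, map_one]
      rfl
  · have hcard : K.index = ∏ t, s t := by
      rw [Subgroup.index_eq_card, Nat.card_congr φ.toEquiv, Nat.card_pi]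
      exact Finset.prod_congr rfl fun t _ => Nat.card_zmod _
    rw [hcard]
    exact sum_le_prod_of_two_le s fun t => (hps t).two_le

open MulAction in
lemma orbits_decomp {Γ α : Type} [Group Γ] [Fintype α] [MulAction Γ α]
    (hcomm : ∀ a b : Γ, a * b = b * a)
    (hfaith : ∀ g : Γ, (∀ x : α, g • x = x) → g = 1) :
    ∃ (J : Type) (_ : Fintype J) (K : J → Subgroup Γ),
      (⨅ j, K j) = ⊥ ∧ (∑ j, (K j).index) ≤ Fintype.card α := by
  classical
  let J := orbitRel.Quotient Γ α
  haveI hJf : Finite J := Quotient.finite _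
  haveI : Fintype J := Fintype.ofFinite J
  refine ⟨J, inferInstance, fun ω => stabilizer Γ ω.out, ?_, ?_⟩
  · rw [eq_bot_iff]
    intro g hg
    rw [Subgroup.mem_iInf] at hg
    have hg' : ∀ x : α, g • x = x := by
      intro x
      let ω : J := Quotient.mk'' x
      have hout : (ω.out : α) ∈ orbit Γ x := Quotient.mk_out (s := orbitRel Γ α) x
      obtain ⟨h, hh⟩ := hout
      have hgout : g • (ω.out : α) = ω.out := hg ω
      have hx : x = h⁻¹ • (ω.out : α) := by rw [← hh]; simp
      rw [hx]
      calc g • (h⁻¹ • (ω.out : α)) = (g * h⁻¹) • (ω.out : α) := (smul_smul g h⁻¹ _)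
        _ = (h⁻¹ * g) • (ω.out : α) := by rw [hcomm]
        _ = h⁻¹ • (g • (ω.out : α)) := (smul_smul h⁻¹ g _).symm
        _ = h⁻¹ • (ω.out : α) := by rw [hgout]
    have h1 := hfaith g hg'
    simp [h1, Subgroup.mem_bot]
  · haveI : ∀ ω : J, Fintype (orbit Γ (Quotient.out ω)) := fun _ => Fintype.ofFinite _
    have hcard : Fintype.card α = ∑ ω : J, Fintype.card (orbit Γ (Quotient.out ω)) := by
      rw [Fintype.card_congr (selfEquivSigmaOrbits Γ α)]
      exact Fintype.card_sigma
    rw [hcard]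
    apply le_of_eq
    refine Finset.sum_congr rfl fun ω _ => ?_
    rw [Subgroup.index_eq_card, ← Nat.card_eq_fintype_card]
    exact (Nat.card_congr (orbitEquivQuotientStabilizer Γ (Quotient.out ω))).symm

/-- If an abelian subgroup of `S_n` is isomorphic to a direct product
`C_{q_1} × ⋯ × C_{q_k}` of cyclic groups of prime-power orders `q_i > 1`, then
`q_1 + ⋯ + q_k ≤ n`. -/
theorem sum_le_of_abelian_subgroup_perm
    {n : ℕ} (G : Subgroup (Equiv.Perm (Fin n)))
    (hab : ∀ a b : G, a * b = b * a)
    (k : ℕ) (q : Fin k → ℕ) (hq : ∀ i, IsPrimePow (q i))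
    (e : G ≃* ((i : Fin k) → Multiplicative (ZMod (q i)))) :
    (∑ i, q i) ≤ n := by
  classical
  letI cg : CommGroup G := { (inferInstance : Group G) with mul_comm := hab }
  have hfaith : ∀ g : G, (∀ x : Fin n, g • x = x) → g = 1 := by
    intro g hgx
    have hco : (g : Equiv.Perm (Fin n)) = 1 := by
      apply Equiv.ext
      intro x
      exact hgx x
    exact Subtype.ext hco
  obtain ⟨J, hJ, K, hKbot, hKsum⟩ := orbits_decomp (Γ := G) (α := Fin n) hab hfaith
  choose ι inst s π hps hker hsum using fun j => subgroup_decomp (K j)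
  letI : ∀ j, Fintype (ι j) := inst
  let T := (j : J) × ι j
  let S : T → ℕ := fun x => s x.1 x.2
  let Φ : G →* ((x : T) → Multiplicative (ZMod (S x))) :=
    { toFun := fun g x => π x.1 x.2 g
      map_one' := by funext x; simp
      map_mul' := by intro a b; funext x; simp }
  have hΦinj : Function.Injective Φ := by
    refine (injective_iff_map_eq_one Φ).mpr ?_
    intro g hg1
    have hmem : ∀ j, g ∈ K j := by
      intro j
      rw [← hker j, Subgroup.mem_iInf]
      intro t
      exact congrFun hg1 ⟨j, t⟩
    have hbot : g ∈ ⨅ j, K j := Subgroup.mem_iInf.mpr hmem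
    rwa [hKbot, Subgroup.mem_bot] at hbot
  have hfinj : Function.Injective (Φ.comp e.symm.toMonoidHom) :=
    hΦinj.comp e.symm.injective
  have h1 : ∑ i, q i ≤ ∑ x : T, S x :=
    sum_le_sum_of_embedding q S hq (fun x => hps x.1 x.2) _ hfinj
  calc ∑ i, q i ≤ ∑ x : T, S x := h1
    _ = ∑ j, ∑ t, s j t := by rw [← Finset.univ_sigma_univ, Finset.sum_sigma]
    _ ≤ ∑ j, (K j).index := Finset.sum_le_sum fun j _ => hsum j
    _ ≤ Fintype.card (Fin n) := hKsum
    _ = n := Fintype.card_fin n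
end

section
/- Let G be an abelian subgroup of the symmetric group S_n, and suppose G is isomorphic to a direct product H_1 × ⋯ × H_k of k nontrivial groups. Then 2k ≤ n. -/
def Om (n : ℕ) : ℕ := n.primeFactorsList.length

lemma Om_mul (a b : ℕ) (ha : a ≠ 0) (hb : b ≠ 0) :
    Om (a * b) = Om a + Om b := by
  unfold Om
  rw [(Nat.perm_primeFactorsList_mul ha hb).length_eq, List.length_append]

lemma two_pow_Om_le (n : ℕ) (hn : n ≠ 0) : 2 ^ (Om n) ≤ n := by
  unfold Om
  conv_rhs => rw [← Nat.prod_primeFactorsList hn]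
  generalize hl : n.primeFactorsList = l
  have h2 : ∀ p ∈ l, 2 ≤ p := fun p hp => (Nat.prime_of_mem_primeFactorsList (hl ▸ hp)).two_le
  clear hl
  induction l with
  | nil => simp
  | cons a l ih =>
    simp only [List.length_cons, List.prod_cons, pow_succ]
    have hstep := ih (fun p hp => h2 p (List.mem_cons_of_mem _ hp))
    have ha2 : 2 ≤ a := h2 _ List.mem_cons_self
    calc 2 ^ l.length * 2 ≤ l.prod * a := Nat.mul_le_mul hstep ha2
      _ = a * l.prod := Nat.mul_comm _ _

lemma two_mul_le_two_pow (m : ℕ) (hm : 1 ≤ m) : 2 * m ≤ 2 ^ m := by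
  induction m with
  | zero => simp
  | succ k ih =>
    rcases Nat.eq_zero_or_pos k with hk | hk
    · subst hk; simp
    · have := ih hk
      have h2 : 2 ≤ 2 ^ k := (by calc 2 = 2*1 := rfl
                                    _ ≤ 2*k := by omega
                                    _ ≤ 2^k := this)
      rw [pow_succ]; omega

lemma two_mul_Om_le (n : ℕ) (hn : n ≠ 0) : 2 * Om n ≤ n := by
  rcases Nat.eq_zero_or_pos (Om n) with h | h
  · omega
  · exact (two_mul_le_two_pow _ h).trans (two_pow_Om_le n hn)

lemma one_le_Om (n : ℕ) (hn : 2 ≤ n) : 1 ≤ Om n := by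
  unfold Om
  rcases List.eq_nil_or_concat n.primeFactorsList with h | ⟨l, a, h⟩
  · rw [Nat.primeFactorsList_eq_nil] at h; omega
  · simp [h]

lemma Om_dvd_le (m N : ℕ) (hN : N ≠ 0) (h : m ∣ N) : Om m ≤ Om N := by
  obtain ⟨c, rfl⟩ := h
  have hm : m ≠ 0 := by rintro rfl; simp at hN
  have hc : c ≠ 0 := by rintro rfl; simp at hN
  rw [Om_mul m c hm hc]; omega

lemma Om_prod {ι : Type*} (s : Finset ι) (f : ι → ℕ) (hf : ∀ i ∈ s, f i ≠ 0) :
    Om (∏ i ∈ s, f i) = ∑ i ∈ s, Om (f i) := by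
  classical
  induction s using Finset.induction with
  | empty => simp [Om]
  | @insert a s hns ih =>
    rw [Finset.prod_insert hns, Finset.sum_insert hns,
      Om_mul _ _ (hf a (Finset.mem_insert_self _ _))
        (Finset.prod_ne_zero_iff.mpr fun i hi => hf i (Finset.mem_insert_of_mem hi)),
      ih (fun i hi => hf i (Finset.mem_insert_of_mem hi))]

/-- An abelian subgroup of `S_n` which is isomorphic to a direct product of `k`
nontrivial groups satisfies `2k ≤ n`. -/
theorem two_mul_le_of_abelian_subgroup_perm
    {n : ℕ} (G : Subgroup (Equiv.Perm (Fin n)))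
    (hab : ∀ a b : G, a * b = b * a)
    (k : ℕ) (H : Fin k → Type*) [∀ i, Group (H i)] [∀ i, Nontrivial (H i)]
    (e : G ≃* ((i : Fin k) → H i)) :
    2 * k ≤ n := by
  classical
  letI : CommGroup G := { (show Group G from inferInstance) with mul_comm := hab }
  haveI hGfin : Finite G := inferInstance
  haveI hHfin : ∀ i, Finite (H i) := by
    intro i
    haveI : Finite ((j : Fin k) → H j) := Finite.of_equiv G e.toEquiv
    exact Finite.of_injective (fun x => Function.update (1 : (j : Fin k) → H j) i x)
      (Function.update_injective _ i)
  have hcard : Nat.card G = ∏ i, Nat.card (H i) := by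
    rw [Nat.card_congr e.toEquiv, Nat.card_pi]
  have hH2 : ∀ i, 2 ≤ Nat.card (H i) := fun i =>
    Finite.one_lt_card
  -- orbits
  letI Ω := MulAction.orbitRel.Quotient G (Fin n)
  haveI : Finite Ω := Quotient.finite _
  haveI : Fintype Ω := Fintype.ofFinite _
  let φ : G →* ∀ ω : Ω, G ⧸ MulAction.stabilizer G (Quotient.out ω) :=
    Pi.monoidHom fun ω => QuotientGroup.mk' _
  have hφ : Function.Injective φ := by
    rw [injective_iff_map_eq_one]
    intro g hg
    have hst : ∀ ω : Ω, g ∈ MulAction.stabilizer G (Quotient.out ω) := by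
      intro ω
      have := congrFun hg ω
      exact (QuotientGroup.eq_one_iff g).mp this
    refine Subtype.ext (Equiv.ext fun x => ?_)
    have hx : x ∈ MulAction.orbit G (Quotient.out (Quotient.mk'' x : Ω)) := by
      rw [← MulAction.orbitRel_apply]
      exact Quotient.exact' (Quotient.out_eq' _).symm
    obtain ⟨h, hh⟩ := hx
    have hgx : g • x = x := by
      rw [← hh, smul_smul, mul_comm, ← smul_smul,
        MulAction.mem_stabilizer_iff.mp (hst (Quotient.mk'' x))]
    simpa [Subgroup.smul_def, Equiv.Perm.smul_def] using hgx
  have hdvd : Nat.card G ∣ ∏ ω : Ω, Nat.card (MulAction.orbit G (Quotient.out ω)) := by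
    have := Subgroup.card_dvd_of_injective φ hφ
    rw [Nat.card_pi] at this
    refine this.trans (dvd_of_eq (Finset.prod_congr rfl fun ω _ => ?_))
    exact (Nat.card_congr (MulAction.orbitEquivQuotientStabilizer G _)).symm
  haveI : ∀ ω : Ω, Fintype (MulAction.orbit G (Quotient.out ω)) := fun _ => Fintype.ofFinite _
  have hsum : ∑ ω : Ω, Nat.card (MulAction.orbit G (Quotient.out ω)) = n := by
    simp_rw [Nat.card_eq_fintype_card]
    rw [← Fintype.card_sigma, ← Fintype.card_congr (MulAction.selfEquivSigmaOrbits G (Fin n))]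
    exact Fintype.card_fin n
  have horbpos : ∀ ω : Ω, Nat.card (MulAction.orbit G (Quotient.out ω)) ≠ 0 := by
    intro ω
    haveI : Nonempty (MulAction.orbit G (Quotient.out ω)) :=
      ⟨⟨_, MulAction.mem_orbit_self _⟩⟩
    exact Nat.card_pos.ne'
  -- arithmetic
  have hk : k ≤ Om (Nat.card G) := by
    rw [hcard, Om_prod _ _ (fun i _ => by have := hH2 i; omega)]
    calc k = ∑ _i : Fin k, 1 := by simp
      _ ≤ ∑ i : Fin k, Om (Nat.card (H i)) :=
        Finset.sum_le_sum fun i _ => one_le_Om _ (hH2 i)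
  have hNpos : (∏ ω : Ω, Nat.card (MulAction.orbit G (Quotient.out ω))) ≠ 0 :=
    Finset.prod_ne_zero_iff.mpr fun ω _ => horbpos ω
  have h2 : Om (Nat.card G) ≤ Om (∏ ω : Ω, Nat.card (MulAction.orbit G (Quotient.out ω))) :=
    Om_dvd_le _ _ hNpos hdvd
  have h3 : 2 * Om (∏ ω : Ω, Nat.card (MulAction.orbit G (Quotient.out ω))) ≤ n := by
    calc 2 * Om (∏ ω : Ω, Nat.card (MulAction.orbit G (Quotient.out ω)))
        = ∑ ω : Ω, 2 * Om (Nat.card (MulAction.orbit G (Quotient.out ω))) := by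
          rw [Om_prod _ _ (fun ω _ => horbpos ω), Finset.mul_sum]
      _ ≤ ∑ ω : Ω, Nat.card (MulAction.orbit G (Quotient.out ω)) :=
          Finset.sum_le_sum fun ω _ => two_mul_Om_le _ (horbpos ω)
      _ = n := hsum
  omega
end

section
/- No finite 2-group has exactly 3 rational irreducible complex characters. -/
open CategoryTheory

/-- `χ : G → ℂ` is the character of an irreducible complex representation of `G`. -/
def IsIrrChar (G : Type) [Group G] (χ : G → ℂ) : Prop :=
  ∃ V : FDRep ℂ G, Simple V ∧ ∀ g : G, V.character g = χ g

/-- An element is rational if every irreducible complex character takes a rational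
value on it. -/
def IsRatElem {G : Type} [Group G] (x : G) : Prop :=
  ∀ χ : G → ℂ, IsIrrChar G χ → ∃ q : ℚ, χ x = (q : ℂ)

/-- A conjugacy class is rational if (each) of its elements is rational. -/
def IsRatClass {G : Type} [Group G] (c : ConjClasses G) : Prop :=
  ∀ x ∈ c.carrier, IsRatElem x

/-- A character is rational if all of its values are rational. -/
def IsRatChar {G : Type} [Group G] (χ : G → ℂ) : Prop :=
  ∀ g : G, ∃ q : ℚ, χ g = (q : ℂ)

/-! ### Auxiliary material -/

open CategoryTheory.Limits Module

section Aux

lemma TwoGroupAux.z1 : ∀ u v : ZMod 2,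
    (-1 : ℤˣ) ^ ((u + v).val) = (-1 : ℤˣ) ^ u.val * (-1 : ℤˣ) ^ v.val := by decide

lemma TwoGroupAux.z2 : ∀ u v : ZMod 2,
    (-1 : ℤˣ) ^ u.val = (-1 : ℤˣ) ^ v.val → u = v := by decide

instance TwoGroupAux.instFinHom {E : Type} [Group E] [Finite E] : Finite (E →* ℤˣ) :=
  Finite.of_injective (fun f => (f : E → ℤˣ)) DFunLike.coe_injective

/-- Duality lower bound: an elementary abelian `2`-group has at least as many
homomorphisms to `ℤˣ` as elements. -/
lemma TwoGroupAux.card_le_homcount {E : Type} [CommGroup E] [Finite E]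
    (hE : ∀ x : E, x * x = 1) : Nat.card E ≤ Nat.card (E →* ℤˣ) := by
  haveI : Fact (Nat.Prime 2) := ⟨Nat.prime_two⟩
  letI : Module (ZMod 2) (Additive E) := AddCommGroup.zmodModule (by
    intro x
    rw [two_nsmul]
    exact hE (Additive.toMul x))
  haveI : Module.Finite (ZMod 2) (Additive E) := Module.Finite.of_finite
  let j : Module.Dual (ZMod 2) (Additive E) → (E →* ℤˣ) := fun φ =>
    { toFun := fun g => (-1 : ℤˣ) ^ (φ (Additive.ofMul g)).val
      map_one' := by
        show (-1 : ℤˣ) ^ (φ (Additive.ofMul (1:E))).val = 1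
        rw [show Additive.ofMul (1 : E) = (0 : Additive E) from rfl, map_zero]
        rfl
      map_mul' := fun a b => by
        show (-1 : ℤˣ) ^ (φ (Additive.ofMul (a * b))).val = _
        rw [show Additive.ofMul (a * b) = Additive.ofMul a + Additive.ofMul b from rfl, map_add]
        exact z1 _ _ }
  have hjinj : Function.Injective j := by
    intro φ ψ h
    apply LinearMap.ext
    intro a
    exact z2 _ _ (DFunLike.congr_fun h (Additive.toMul a))
  have h1 : Nat.card E = Nat.card (Module.Dual (ZMod 2) (Additive E)) := by
    let b := Module.finBasis (ZMod 2) (Additive E)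
    let e1 := b.equivFun
    let e2 := b.dualBasis.equivFun
    rw [show Nat.card E = Nat.card (Additive E) from rfl, Nat.card_congr e1.toEquiv,
      Nat.card_congr e2.toEquiv]
  rw [h1]
  exact Nat.card_le_card_of_injective j hjinj

lemma TwoGroupAux.homcount_quot_le {G : Type} [Group G] [Finite G] (N : Subgroup G) [N.Normal] :
    Nat.card ((G ⧸ N) →* ℤˣ) ≤ Nat.card (G →* ℤˣ) := by
  apply Nat.card_le_card_of_injective (fun f => f.comp (QuotientGroup.mk' N))
  intro f1 f2 h
  ext q
  exact congrArg Units.val (DFunLike.congr_fun h q)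

lemma TwoGroupAux.sq_mem_closure {G : Type} [Group G] (g : G) :
    g * g ∈ Subgroup.closure {x : G | ∃ y : G, y * y = x} :=
  Subgroup.subset_closure ⟨g, rfl⟩

/-- An abelian finite 2-group with at most two homomorphisms to `ℤˣ` is cyclic. -/
lemma TwoGroupAux.cyclic_of_abelian (G : Type) [Group G] [Finite G] (hp : IsPGroup 2 G)
    (hcomm : ∀ a b : G, a * b = b * a) (hh : Nat.card (G →* ℤˣ) ≤ 2) : IsCyclic G := by
  classical
  haveI : Fact (Nat.Prime 2) := ⟨Nat.prime_two⟩
  set N : Subgroup G := Subgroup.closure {x : G | ∃ y : G, y * y = x} with hN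
  haveI : N.Normal := ⟨fun n hn g => by
    rw [hcomm g n, mul_assoc, mul_inv_cancel, mul_one]; exact hn⟩
  have hEsq : ∀ e : G ⧸ N, e * e = 1 := by
    intro e
    induction e using QuotientGroup.induction_on with
    | H g =>
      rw [← QuotientGroup.mk_mul, QuotientGroup.eq_one_iff]
      exact sq_mem_closure g
  have hinvE : ∀ e : G ⧸ N, e⁻¹ = e := fun e => inv_eq_of_mul_eq_one_right (hEsq e)
  letI : CommGroup (G ⧸ N) :=
    { (inferInstance : Group (G ⧸ N)) with
      mul_comm := fun a b => by
        have h1 : (a * b)⁻¹ = a * b := hinvE _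
        rw [mul_inv_rev, hinvE a, hinvE b] at h1
        exact h1.symm }
  have hcardE : Nat.card (G ⧸ N) ≤ 2 :=
    le_trans (card_le_homcount hEsq) (le_trans (homcount_quot_le N) hh)
  have hcycE : IsCyclic (G ⧸ N) := by
    rcases Nat.lt_or_ge (Nat.card (G ⧸ N)) 2 with h | h
    · haveI : Subsingleton (G ⧸ N) := by
        rw [← Finite.card_le_one_iff_subsingleton]; omega
      infer_instance
    · exact isCyclic_of_prime_card (p := 2) (le_antisymm hcardE h)
  obtain ⟨ebar, hebar⟩ := hcycE.exists_generator
  obtain ⟨x, rfl⟩ := QuotientGroup.mk_surjective ebar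
  set H : Subgroup G := Subgroup.zpowers x with hH
  haveI : H.Normal := ⟨fun n hn g => by
    rw [hcomm g n, mul_assoc, mul_inv_cancel, mul_one]; exact hn⟩
  by_cases hHT : H = ⊤
  · exact ⟨x, fun g => (Subgroup.eq_top_iff' H).mp hHT g⟩
  exfalso
  have hgex : ∃ g : G, g ∉ H := by
    by_contra hc
    push_neg at hc
    exact hHT ((Subgroup.eq_top_iff' H).mpr hc)
  obtain ⟨g0, hg0⟩ := hgex
  haveI : Nontrivial (G ⧸ H) := ⟨QuotientGroup.mk g0, 1, by
    rw [Ne, QuotientGroup.eq_one_iff]; exact hg0⟩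
  have hcommQ : ∀ a b : G ⧸ H, a * b = b * a := by
    intro a b
    induction a using QuotientGroup.induction_on with
    | H a =>
      induction b using QuotientGroup.induction_on with
      | H b => rw [← QuotientGroup.mk_mul, ← QuotientGroup.mk_mul, hcomm]
  let SQ : Subgroup (G ⧸ H) :=
    { carrier := {q | ∃ r, r * r = q}
      one_mem' := ⟨1, one_mul 1⟩
      mul_mem' := by
        rintro _ _ ⟨r, rfl⟩ ⟨s, rfl⟩
        exact ⟨r * s, by
          rw [mul_assoc, ← mul_assoc s r s, hcommQ s r, mul_assoc, ← mul_assoc]⟩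
      inv_mem' := by
        rintro _ ⟨r, rfl⟩
        exact ⟨r⁻¹, by rw [mul_inv_rev]⟩ }
  have hNSQ : N ≤ SQ.comap ((QuotientGroup.mk' H : G →* G ⧸ H)) := by
    rw [hN]
    apply Subgroup.closure_le _ |>.mpr
    rintro _ ⟨y, rfl⟩
    exact ⟨QuotientGroup.mk y, by rw [← QuotientGroup.mk_mul]; rfl⟩
  have hsq : ∀ q : G ⧸ H, ∃ r : G ⧸ H, r * r = q := by
    intro q
    induction q using QuotientGroup.induction_on with
    | H g =>
      obtain ⟨k, hk⟩ := hebar (QuotientGroup.mk g)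
      have hk' : QuotientGroup.mk (x ^ k) = (QuotientGroup.mk g : G ⧸ N) := by
        rw [QuotientGroup.mk_zpow]; exact hk
      have hn : (x ^ k)⁻¹ * g ∈ N := QuotientGroup.eq.mp hk'
      have hxk : QuotientGroup.mk (x ^ k) = (1 : G ⧸ H) := by
        rw [QuotientGroup.eq_one_iff]
        exact Subgroup.zpow_mem H (Subgroup.mem_zpowers x) k
      have : QuotientGroup.mk ((x ^ k)⁻¹ * g) ∈ SQ := hNSQ hn
      obtain ⟨r, hr⟩ := this
      refine ⟨r, ?_⟩
      rw [hr]
      rw [QuotientGroup.mk_mul, QuotientGroup.mk_inv, hxk]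
      simp
  have hsurj : Function.Surjective (fun q : G ⧸ H => q * q) := fun q => hsq q
  have hinj : Function.Injective (fun q : G ⧸ H => q * q) :=
    Finite.injective_iff_surjective.mpr hsurj
  haveI : Fintype (G ⧸ H) := Fintype.ofFinite _
  have hpQ : IsPGroup 2 (G ⧸ H) := hp.to_quotient H
  obtain ⟨k, hk⟩ := (IsPGroup.iff_card).mp hpQ
  have hk1 : 1 ≤ k := by
    have h1 := Finite.one_lt_card (α := G ⧸ H)
    rw [hk] at h1
    by_contra hc
    push_neg at hc
    interval_cases k
    · omega
  have hdvd : 2 ∣ Fintype.card (G ⧸ H) := by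
    rw [← Nat.card_eq_fintype_card, hk]
    exact dvd_pow_self 2 (by omega)
  obtain ⟨t, ht⟩ := exists_prime_orderOf_dvd_card 2 hdvd
  have ht2 : t * t = 1 := by
    rw [← sq, ← ht]
    exact pow_orderOf_eq_one t
  have := hinj (a₁ := t) (a₂ := 1) (by simpa using ht2)
  rw [this] at ht
  simp [orderOf_one] at ht

/-- A finite 2-group with at most two homomorphisms to `ℤˣ` is cyclic. -/
lemma TwoGroupAux.cyclic_of_homcount : ∀ (n : ℕ) (G : Type) [Group G] [Finite G],
    Nat.card G = n → IsPGroup 2 G → Nat.card (G →* ℤˣ) ≤ 2 → IsCyclic G := by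
  intro n
  induction n using Nat.strong_induction_on with
  | _ n IH =>
    intro G _ _ hn hp hh
    rcases subsingleton_or_nontrivial G with hs | hnt
    · infer_instance
    · by_cases hZT : Subgroup.center G = ⊤
      · apply cyclic_of_abelian G hp _ hh
        intro a b
        have hb : b ∈ Subgroup.center G := by rw [hZT]; exact Subgroup.mem_top b
        exact (Subgroup.mem_center_iff.mp hb a)
      · exfalso
        haveI hZnt : Nontrivial (Subgroup.center G) := hp.center_nontrivial
        set Z := Subgroup.center G with hZ
        have hcardlt : Nat.card (G ⧸ Z) < n := by
          have hmul := Subgroup.card_eq_card_quotient_mul_card_subgroup Z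
          have h2 : 2 ≤ Nat.card Z := Finite.one_lt_card
          have hpos : 0 < Nat.card (G ⧸ Z) := Nat.card_pos
          rw [hn] at hmul
          nlinarith
        have hcyc : IsCyclic (G ⧸ Z) :=
          IH _ hcardlt (G ⧸ Z) rfl (hp.to_quotient Z) (le_trans (homcount_quot_le Z) hh)
        have hc : ∀ a b : G, a * b = b * a :=
          commutative_of_cyclic_center_quotient (QuotientGroup.mk' Z) (by
            rw [QuotientGroup.ker_mk'])
        apply hZT
        rw [Subgroup.eq_top_iff']
        intro g
        rw [Subgroup.mem_center_iff]
        intro h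
        exact hc h g

variable {G : Type} [Group G]

/-- The one-dimensional representation attached to a homomorphism `G →* ℤˣ`. -/
noncomputable def TwoGroupAux.homRep (φ : G →* ℤˣ) : FDRep ℂ G :=
  FDRep.of (V := ℂ)
    { toFun := fun g => ((φ g : ℤ) : ℂ) • LinearMap.id
      map_one' := by simp; rfl
      map_mul' := fun g h => by
        ext
        simp [mul_comm] }

lemma TwoGroupAux.homRep_char (φ : G →* ℤˣ) (g : G) :
    (homRep φ).character g = ((φ g : ℤ) : ℂ) := by
  rw [FDRep.character]
  have h : (homRep φ).ρ g = ((φ g : ℤ) : ℂ) • LinearMap.id := rfl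
  rw [h, map_smul, LinearMap.trace_id]
  have h2 : (finrank ℂ (homRep φ) : ℂ) = 1 := by
    rw [show finrank ℂ (homRep φ) = 1 from Module.finrank_self ℂ]; norm_num
  rw [h2]
  simp

lemma TwoGroupAux.homRep_finrank (φ : G →* ℤˣ) : finrank ℂ (homRep φ) = 1 :=
  Module.finrank_self ℂ

/-- A one-dimensional representation is simple. -/
lemma TwoGroupAux.simple_of_finrank_one (V : FDRep ℂ G) (h : finrank ℂ V = 1) : Simple V := by
  haveI : Nontrivial V := by
    apply Module.nontrivial_of_finrank_pos (R := ℂ); omega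
  constructor
  intro W f hf
  constructor
  · intro hiso h0
    obtain ⟨v, hv⟩ := exists_ne (0 : V)
    have this1 : inv f ≫ f = 𝟙 V := IsIso.inv_hom_id f
    subst h0
    rw [comp_zero] at this1
    have h2 : ((𝟙 V : V ⟶ V).hom.hom.hom : V →ₗ[ℂ] V) = 0 := by rw [← this1]; rfl
    have := LinearMap.congr_fun h2 v
    simp at this
    exact hv this
  · intro hne
    have hfh : (f.hom.hom.hom : W →ₗ[ℂ] V) ≠ 0 := by
      intro h0; exact hne (by ext x; simpa using LinearMap.congr_fun h0 x)
    have hsurj : Function.Surjective (f.hom.hom.hom : W →ₗ[ℂ] V) :=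
      surjective_of_nonzero_of_finrank_eq_one (K := ℂ) (A := ℂ) h hfh
    set K : Submodule ℂ W := LinearMap.ker (f.hom.hom.hom : W →ₗ[ℂ] V) with hK
    have hmap : ∀ g : G, ∀ x ∈ K, W.ρ g x ∈ K := by
      intro g x hx
      have heq : f.hom.hom.hom (W.ρ g x) = V.ρ g (f.hom.hom.hom x) := by
        have := LinearMap.congr_fun (congrArg (fun φ => φ.hom.hom) (f.comm g)) x; exact this
      simp only [hK, LinearMap.mem_ker] at hx ⊢
      calc f.hom.hom.hom (W.ρ g x) = V.ρ g (f.hom.hom.hom x) := heq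
        _ = 0 := by simpa using congrArg (V.ρ g) hx
    let ρK : Representation ℂ G K :=
      { toFun := fun g => (W.ρ g).restrict (hmap g)
        map_one' := by ext x; simp
        map_mul' := fun g h => by ext x; simp }
    let KV : FDRep ℂ G := FDRep.of ρK
    let ι : KV ⟶ W := ⟨FGModuleCat.ofHom K.subtype, fun g => rfl⟩
    have hι : ι ≫ f = 0 := by
      ext : 1
      apply FGModuleCat.hom_ext
      apply LinearMap.ext
      rintro ⟨x, hx⟩
      exact hx
    have hι0 : ι = 0 := by
      haveI := hf
      rw [← cancel_mono f, hι, Limits.zero_comp]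
    have hKbot : K = ⊥ := by
      rw [Submodule.eq_bot_iff]
      intro x hx
      have : (ι.hom.hom.hom : KV →ₗ[ℂ] W) ⟨x, hx⟩ = 0 := by
        rw [show (ι.hom.hom.hom : KV →ₗ[ℂ] W) = 0 from congrArg (fun φ : KV ⟶ W => φ.hom.hom.hom) hι0]; rfl
      exact this
    have hinj : Function.Injective (f.hom.hom.hom : W →ₗ[ℂ] V) := by
      rw [← LinearMap.ker_eq_bot]; exact hKbot
    let e : W ≃ₗ[ℂ] V := LinearEquiv.ofBijective f.hom.hom.hom ⟨hinj, hsurj⟩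
    have happ : ∀ w, f.hom.hom.hom (e.symm w) = w := fun w => e.apply_symm_apply w
    let ginv : V ⟶ W := ⟨FGModuleCat.ofHom (e.symm : V →ₗ[ℂ] W), by
      intro g
      ext v
      show (e.symm : V →ₗ[ℂ] W) (V.ρ g v) = W.ρ g ((e.symm : V →ₗ[ℂ] W) v)
      apply hinj
      have h2 : f.hom.hom.hom (W.ρ g (e.symm v)) = V.ρ g (f.hom.hom.hom (e.symm v)) := by
        have := LinearMap.congr_fun (congrArg (fun φ => φ.hom.hom) (f.comm g)) (e.symm v); exact this
      simp only [LinearEquiv.coe_coe]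
      rw [happ, h2, happ]⟩
    exact ⟨⟨ginv, by
      ext w
      show e.symm (f.hom.hom.hom w) = w
      exact e.symm_apply_apply w, by
      ext v
      show f.hom.hom.hom (e.symm v) = v
      exact e.apply_symm_apply v⟩⟩

/-- The character of a simple representation of a finite abelian group is a degree-one
multiplicative character. -/
lemma TwoGroupAux.char_hom [Fintype G] (hc : ∀ a b : G, a * b = b * a) (V : FDRep ℂ G)
    [Simple V] :
    V.character 1 = 1 ∧ (∀ g h : G, V.character (g * h) = V.character g * V.character h)
      ∧ ∀ g : G, V.character g ≠ 0 := by
  classical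
  haveI : Invertible (Fintype.card G : ℂ) :=
    invertibleOfNonzero (Nat.cast_ne_zero.2 Fintype.card_ne_zero)
  haveI hnt : Nontrivial V := by
    by_contra hs
    rw [not_nontrivial_iff_subsingleton] at hs
    have hz : IsZero V := by
      rw [IsZero.iff_id_eq_zero]
      ext : 1
      apply FGModuleCat.hom_ext
      apply LinearMap.ext
      intro v
      exact hs.elim _ _
    exact Simple.not_isZero V hz
  obtain ⟨v0, hv0⟩ := exists_ne (0 : V)
  have hdim : finrank ℂ (V ⟶ V) = 1 := by
    rw [FDRep.finrank_hom_simple_simple V V, if_pos ⟨Iso.refl V⟩]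
  have hscal : ∀ g : G, ∃ c : ℂ, V.ρ g = c • LinearMap.id := by
    intro g
    let Fg : V ⟶ V := ⟨FGModuleCat.ofHom (V.ρ g), fun h => by
      ext x
      show V.ρ g (V.ρ h x) = V.ρ h (V.ρ g x)
      rw [← Module.End.mul_apply, ← Module.End.mul_apply, ← map_mul, ← map_mul, hc]⟩
    obtain ⟨c, hcc⟩ := (finrank_eq_one_iff_of_nonzero' (𝟙 V) (id_nonzero V)).mp hdim Fg
    exact ⟨c, (congrArg (fun f : V ⟶ V => f.hom.hom.hom) hcc).symm⟩
  have huniq : ∀ (a b : ℂ), a • (LinearMap.id : V →ₗ[ℂ] V) = b • LinearMap.id → a = b := by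
    intro a b hab
    have := LinearMap.congr_fun hab v0
    simp only [LinearMap.smul_apply, LinearMap.id_apply] at this
    exact smul_left_injective ℂ hv0 this
  choose c hc2 using hscal
  set d : ℕ := finrank ℂ V with hd
  have hchar : ∀ g : G, V.character g = c g * d := by
    intro g
    rw [FDRep.character, hc2 g, map_smul, LinearMap.trace_id]
    simp [hd, mul_comm]
  have hc1 : c 1 = 1 := by
    apply huniq
    rw [← hc2 1, map_one, one_smul]
    rfl
  have hcm : ∀ g h : G, c (g * h) = c g * c h := by
    intro g h
    apply huniq
    rw [← hc2 (g * h), map_mul]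
    rw [show (V.ρ g) * (V.ρ h) = (V.ρ g).comp (V.ρ h) from rfl]
    rw [hc2 g, hc2 h]
    ext w
    simp [smul_smul, mul_comm]
  have hcinv : ∀ g : G, c g * c g⁻¹ = 1 := fun g => by
    rw [← hcm, mul_inv_cancel, hc1]
  letI : Invertible ((Nat.card G : ℂ)) :=
    invertibleOfNonzero (Nat.cast_ne_zero.2 Nat.card_pos.ne')
  have horth0 := FDRep.char_orthonormal (k := ℂ) (G := G) V V
  rw [if_pos ⟨Iso.refl V⟩] at horth0
  have horth : ∃ _ : Invertible ((Fintype.card G : ℂ)),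
      (⅟(Fintype.card G : ℂ)) • ∑ g : G, V.character g * V.character g⁻¹ = 1 :=
      ⟨‹_›, by rw [invOf_eq_inv, smul_eq_mul, ← Nat.card_eq_fintype_card]; simpa using horth0⟩
  obtain ⟨inst2, heq⟩ := horth
  have hterm : ∀ g : G, V.character g * V.character g⁻¹ = (d : ℂ) * d := by
    intro g
    rw [hchar g, hchar g⁻¹]
    calc c g * d * (c g⁻¹ * d) = (c g * c g⁻¹) * ((d:ℂ) * d) := by ring
      _ = (d:ℂ) * d := by rw [hcinv, one_mul]
  rw [Finset.sum_congr rfl fun g _ => hterm g, Finset.sum_const, Finset.card_univ,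
    nsmul_eq_mul, smul_eq_mul, invOf_mul_cancel_left] at heq
  have hd1 : d = 1 := by
    have h11 : ((d * d : ℕ) : ℂ) = ((1 : ℕ) : ℂ) := by push_cast; exact heq
    have := Nat.cast_injective h11; nlinarith [this]
  have hdc : (d : ℂ) = 1 := by rw [hd1]; norm_num
  refine ⟨?_, ?_, ?_⟩
  · rw [hchar 1, hc1, hdc, one_mul]
  · intro g h
    rw [hchar (g*h), hchar g, hchar h, hcm, hdc]
    ring
  · intro g
    rw [hchar g, hdc, mul_one]
    intro h0
    have := hcinv g
    rw [h0, zero_mul] at this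
    exact zero_ne_one this

end Aux

/-- No finite 2-group has exactly 3 rational irreducible complex characters. -/
theorem two_group_not_three_rational_chars
    {G : Type} [Group G] [Fintype G]
    (h2 : ∃ m : ℕ, Nat.card G = 2 ^ m) :
    Nat.card {χ : G → ℂ // IsIrrChar G χ ∧ IsRatChar χ} ≠ 3 := by
  classical
  intro h3
  obtain ⟨m, hm⟩ := h2
  haveI : Fact (Nat.Prime 2) := ⟨Nat.prime_two⟩
  set S := {χ : G → ℂ // IsIrrChar G χ ∧ IsRatChar χ} with hS
  haveI hfin : Finite S := by
    by_contra hinf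
    rw [not_finite_iff_infinite] at hinf
    rw [Nat.card_eq_zero_of_infinite] at h3
    omega
  -- injection from homomorphisms to rational irreducible characters
  let j : (G →* ℤˣ) → S := fun φ =>
    ⟨fun g => ((φ g : ℤ) : ℂ),
      ⟨TwoGroupAux.homRep φ,
        TwoGroupAux.simple_of_finrank_one _ (TwoGroupAux.homRep_finrank φ),
        fun g => TwoGroupAux.homRep_char φ g⟩,
      fun g => by
        rcases Int.units_eq_one_or (φ g) with h | h
        · exact ⟨1, by show ((φ g : ℤ) : ℂ) = _; rw [h]; norm_num⟩
        · exact ⟨-1, by show ((φ g : ℤ) : ℂ) = _; rw [h]; norm_num⟩⟩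
  have hjinj : Function.Injective j := by
    intro φ1 φ2 h
    ext g
    have := congrArg (fun σ : S => σ.1 g) h
    simp only [j] at this
    exact_mod_cast this
  have hle3 : Nat.card (G →* ℤˣ) ≤ 3 := by
    rw [← h3]
    exact Nat.card_le_card_of_injective j hjinj
  -- the group of homomorphisms is a 2-group, so it has at most 2 elements
  have hphom : IsPGroup 2 (G →* ℤˣ) := by
    intro φ
    refine ⟨1, ?_⟩
    ext g
    show (((φ ^ 2 ^ 1) g : ℤˣ) : ℤ) = (((1 : G →* ℤˣ) g : ℤˣ) : ℤ)
    rw [show (2:ℕ) ^ 1 = 2 from rfl, pow_two, MonoidHom.mul_apply, Int.units_mul_self]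
    rfl
  have hhom2 : Nat.card (G →* ℤˣ) ≤ 2 := by
    obtain ⟨k, hk⟩ := (IsPGroup.iff_card (p := 2)).mp hphom
    rw [hk] at hle3 ⊢
    have hk1 : k ≤ 1 := by
      by_contra hc
      push_neg at hc
      have : 2 ^ 2 ≤ 2 ^ k := Nat.pow_le_pow_right (by norm_num) hc
      omega
    calc 2 ^ k ≤ 2 ^ 1 := Nat.pow_le_pow_right (by norm_num) hk1
      _ = 2 := rfl
  -- hence G is cyclic, in particular commutative
  have hcyc : IsCyclic G :=
    TwoGroupAux.cyclic_of_homcount (Nat.card G) G rfl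
      ((IsPGroup.iff_card (p := 2)).mpr ⟨m, hm⟩) hhom2
  obtain ⟨gen, hgen⟩ := hcyc.exists_generator
  have hcomm : ∀ a b : G, a * b = b * a := by
    intro a b
    obtain ⟨i, hi⟩ := hgen a
    obtain ⟨jj, hj⟩ := hgen b
    rw [← hi, ← hj, ← zpow_add, ← zpow_add, add_comm]
  -- every rational irreducible character is a homomorphism to {±1}
  have hval : ∀ σ : S, σ.1 1 = 1 ∧ (∀ g h : G, σ.1 (g * h) = σ.1 g * σ.1 h)
      ∧ ∀ g : G, σ.1 g = 1 ∨ σ.1 g = -1 := by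
    rintro ⟨χ, ⟨V, hsimple, hV⟩, hrat⟩
    show χ 1 = 1 ∧ (∀ g h : G, χ (g * h) = χ g * χ h) ∧ ∀ g : G, χ g = 1 ∨ χ g = -1
    haveI := hsimple
    obtain ⟨h1, hmul, hne⟩ := TwoGroupAux.char_hom hcomm V
    have hχ1 : χ 1 = 1 := by rw [← hV 1]; exact h1
    have hχm : ∀ g h : G, χ (g * h) = χ g * χ h := by
      intro g h
      rw [← hV (g * h), ← hV g, ← hV h]
      exact hmul g h
    refine ⟨hχ1, hχm, ?_⟩
    intro g
    have hpow : ∀ n : ℕ, χ (g ^ n) = (χ g) ^ n := by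
      intro n
      induction n with
      | zero => simpa using hχ1
      | succ n ih => rw [pow_succ, pow_succ, hχm, ih]
    have hgcard : g ^ (2 ^ m) = 1 := by rw [← hm]; exact pow_card_eq_one'
    have hroots : (χ g) ^ (2 ^ m) = 1 := by
      rw [← hpow, hgcard, hχ1]
    obtain ⟨q, hq⟩ := hrat g
    rw [hq] at hroots ⊢
    have hqpow : q ^ (2 ^ m) = 1 := by exact_mod_cast hroots
    rcases (pow_eq_one_iff_of_ne_zero (by positivity)).mp hqpow with h | h
    · left; rw [h]; norm_num
    · right; rw [h.1]; norm_num
  have hΨ : ∀ σ : S, ∃ ψ : G →* ℤˣ, ∀ g : G, ((ψ g : ℤ) : ℂ) = σ.1 g := by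
    intro σ
    obtain ⟨h1, hmul, hpm⟩ := hval σ
    have hkey : ∀ g : G, ((((if σ.1 g = 1 then (1 : ℤˣ) else -1) : ℤˣ) : ℤ) : ℂ) = σ.1 g := by
      intro g
      rcases hpm g with h | h
      · rw [if_pos h, h]; norm_num
      · rw [if_neg (by rw [h]; norm_num), h]; norm_num
    refine ⟨{ toFun := fun g => if σ.1 g = 1 then (1 : ℤˣ) else -1
              map_one' := by
                show (if σ.1 (1:G) = 1 then (1 : ℤˣ) else -1) = 1
                rw [if_pos h1]
              map_mul' := ?_ }, fun g => hkey g⟩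
    intro g h
    show (if σ.1 (g * h) = 1 then (1 : ℤˣ) else -1)
      = (if σ.1 g = 1 then (1 : ℤˣ) else -1) * (if σ.1 h = 1 then (1 : ℤˣ) else -1)
    have hne : (-1 : ℂ) ≠ 1 := by norm_num
    have hprod := hmul g h
    rcases hpm g with hg | hg <;> rcases hpm h with hh | hh <;> rw [hg, hh] at hprod
    · rw [if_pos (show σ.1 (g*h) = 1 by rw [hprod]; norm_num), if_pos hg, if_pos hh]; decide
    · rw [if_neg (show ¬ σ.1 (g*h) = 1 by rw [hprod]; norm_num), if_pos hg,
        if_neg (show ¬ σ.1 h = 1 by rw [hh]; exact hne)]; decide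
    · rw [if_neg (show ¬ σ.1 (g*h) = 1 by rw [hprod]; norm_num),
        if_neg (show ¬ σ.1 g = 1 by rw [hg]; exact hne), if_pos hh]; decide
    · rw [if_pos (show σ.1 (g*h) = 1 by rw [hprod]; norm_num),
        if_neg (show ¬ σ.1 g = 1 by rw [hg]; exact hne),
        if_neg (show ¬ σ.1 h = 1 by rw [hh]; exact hne)]; decide
  choose Ψ hΨval using hΨ
  have hΨinj : Function.Injective Ψ := by
    intro σ1 σ2 h
    apply Subtype.ext
    funext g
    rw [← hΨval σ1 g, ← hΨval σ2 g, h]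
  have : Nat.card S ≤ Nat.card (G →* ℤˣ) := Nat.card_le_card_of_injective Ψ hΨinj
  omega
end

section
/- For every integer n ≥ 2, the generalized quaternion group of order 2^{n+1} has exactly 5 rational conjugacy classes. -/
set_option linter.unusedSectionVars false
set_option maxHeartbeats 1000000

open CategoryTheory

namespace QRatAux

open FDRep

section RatGeneral

variable {G : Type} [Group G]

lemma isRatElem_of_isConj {x y : G} (h : IsConj x y) (hx : IsRatElem x) : IsRatElem y := by
  intro χ hχ
  obtain ⟨q, hq⟩ := hx χ hχ
  obtain ⟨V, hV, hVχ⟩ := hχ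
  obtain ⟨g, hg⟩ := isConj_iff.mp h
  exact ⟨q, by rw [← hVχ, ← hg, FDRep.char_conj, hVχ, hq]⟩

lemma isRatElem_one : IsRatElem (1 : G) := by
  rintro χ ⟨V, hV, hVχ⟩
  exact ⟨Module.finrank ℂ V, by rw [← hVχ, FDRep.char_one]; norm_num⟩

/-- The action of a central element on a simple rep, as an endomorphism in `FDRep`. -/
noncomputable def centralHom (V : FDRep ℂ G) {z : G} (hz : ∀ g : G, z * g = g * z) : V ⟶ V where
  hom := FGModuleCat.ofHom (V.ρ z)
  comm g := by
    apply FGModuleCat.hom_ext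
    show V.ρ z ∘ₗ V.ρ g = V.ρ g ∘ₗ V.ρ z
    ext v
    simp only [LinearMap.comp_apply, ← Module.End.mul_apply, ← map_mul, hz]

lemma exists_ne_zero (V : FDRep ℂ G) [Simple V] : ∃ v : V, v ≠ 0 := by
  by_contra h
  push_neg at h
  apply id_nonzero V
  apply Action.Hom.ext
  apply FGModuleCat.hom_ext
  show (LinearMap.id : V →ₗ[ℂ] V) = 0
  ext v
  simpa using h v

lemma central_invol (V : FDRep ℂ G) [Simple V] {z : G} (hz : ∀ g : G, z * g = g * z)
    (hz2 : z * z = 1) :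
    ∃ c : ℂ, V.ρ z = c • (LinearMap.id : V →ₗ[ℂ] V) ∧ (c = 1 ∨ c = -1) := by
  obtain ⟨c, hc⟩ := endomorphism_simple_eq_smul_id ℂ (centralHom V hz)
  have hc' : V.ρ z = c • (LinearMap.id : V →ₗ[ℂ] V) := by
    have := congrArg Action.Hom.hom hc
    rw [Action.smul_hom] at this
    exact (congrArg (fun f => f.hom.hom) this).symm
  refine ⟨c, hc', ?_⟩
  obtain ⟨v, hv⟩ := exists_ne_zero V
  have h1 : V.ρ z (V.ρ z v) = v := by
    rw [← Module.End.mul_apply, ← map_mul, hz2, map_one, Module.End.one_apply]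
  rw [hc'] at h1
  simp only [LinearMap.smul_apply, LinearMap.id_apply, smul_smul] at h1
  have : (c * c - 1) • v = 0 := by rw [sub_smul, one_smul, h1, sub_self]
  rcases smul_eq_zero.mp this with h | h
  · exact mul_self_eq_one_iff.mp (by linear_combination h)
  · exact absurd h hv

lemma isRatElem_central_invol {z : G} (hz : ∀ g : G, z * g = g * z) (hz2 : z * z = 1) :
    IsRatElem z := by
  rintro χ ⟨V, hV, hVχ⟩
  obtain ⟨c, hc, hc1⟩ := central_invol V hz hz2
  have : V.character z = c * Module.finrank ℂ V := by
    rw [FDRep.character, hc, map_smul, LinearMap.trace_id, smul_eq_mul]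
  rcases hc1 with h | h
  · exact ⟨Module.finrank ℂ V, by rw [← hVχ, this, h]; norm_num⟩
  · exact ⟨-(Module.finrank ℂ V), by rw [← hVχ, this, h]; push_cast; ring⟩

lemma trace_rat_of_invol {E : Type} [AddCommGroup E] [Module ℂ E] [FiniteDimensional ℂ E]
    (f : E →ₗ[ℂ] E) (hf : f ∘ₗ f = LinearMap.id) :
    ∃ q : ℚ, LinearMap.trace ℂ E f = (q : ℂ) := by
  set p : E →ₗ[ℂ] E := (2⁻¹ : ℂ) • (LinearMap.id + f) with hpdef
  have hff : ∀ v, f (f v) = v := fun v => by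
    have := LinearMap.congr_fun hf v; simpa using this
  have hp : p ∘ₗ p = p := by
    ext v
    simp only [hpdef, LinearMap.comp_apply, LinearMap.smul_apply, LinearMap.add_apply,
      LinearMap.id_apply, map_add, map_smul, hff, smul_add]
    rw [smul_smul]
    ring_nf
    module
  obtain ⟨P, hP⟩ := (LinearMap.isProj_iff_isIdempotentElem p).mpr hp
  have ht : LinearMap.trace ℂ E p = (Module.finrank ℂ P : ℂ) := hP.trace
  have hf' : f = (2 : ℂ) • p - LinearMap.id := by
    rw [hpdef]; rw [smul_smul]; norm_num
  refine ⟨2 * (Module.finrank ℂ P : ℚ) - (Module.finrank ℂ E : ℚ), ?_⟩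
  rw [hf', map_sub, map_smul, ht, LinearMap.trace_id, smul_eq_mul]
  push_cast
  ring

lemma isRatElem_of_sq_central {x z : G} (hz : ∀ g : G, z * g = g * z) (hz2 : z * z = 1)
    (hx2 : x * x = z) (hconj : IsConj x (x * z)) : IsRatElem x := by
  rintro χ ⟨V, hV, hVχ⟩
  obtain ⟨c, hc, hc1⟩ := central_invol V hz hz2
  rcases hc1 with h | h
  · -- `ρ x` is an involution
    have hinv : V.ρ x ∘ₗ V.ρ x = LinearMap.id := by
      have : V.ρ x ∘ₗ V.ρ x = V.ρ z := by
        rw [← hx2, map_mul]; rfl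
      rw [this, hc, h, one_smul]
    obtain ⟨q, hq⟩ := trace_rat_of_invol (V.ρ x) hinv
    exact ⟨q, by rw [← hVχ]; exact hq⟩
  · -- `χ x = - χ x`
    have h2 : V.character (x * z) = -V.character x := by
      show LinearMap.trace ℂ V (V.ρ (x * z)) = _
      rw [map_mul, hc, h]
      have : V.ρ x * (-1 : ℂ) • LinearMap.id = -(V.ρ x) := by
        ext v; simp
      rw [this, map_neg]
      rfl
    have h3 : V.character (x * z) = V.character x := by
      obtain ⟨g, hg⟩ := isConj_iff.mp hconj
      rw [← hg, FDRep.char_conj]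
    refine ⟨0, ?_⟩
    rw [← hVχ]
    have : V.character x = 0 := by
      have := h3.symm.trans h2
      linear_combination (this : V.character x = -V.character x) / 2
    rw [this]; norm_num

end RatGeneral

section Irrat

/-- A `2`-power root of unity whose 4th power is not 1 has irrational real part sum. -/
lemma irrational_aux (w : ℂ) (j : ℕ) (h1 : w ^ (2 ^ j) = 1) (h4 : w ^ 4 ≠ 1) (q : ℚ) :
    w + w⁻¹ ≠ (q : ℂ) := by
  intro hq
  have hw0 : w ≠ 0 := by
    intro h; rw [h] at h1; simp [zero_pow, pow_ne_zero] at h1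
  have hdvd : orderOf w ∣ 2 ^ j := orderOf_dvd_of_pow_eq_one h1
  have hd0 : 0 < orderOf w := by
    rcases Nat.eq_zero_or_pos (orderOf w) with h | h
    · rw [h] at hdvd
      exact absurd (Nat.eq_zero_of_zero_dvd hdvd) (by positivity)
    · exact h
  obtain ⟨t, htj, hdt⟩ := (Nat.dvd_prime_pow Nat.prime_two).mp hdvd
  have h3t : 3 ≤ t := by
    by_contra h
    push_neg at h
    apply h4
    apply orderOf_dvd_iff_pow_eq_one.mp
    rw [hdt]
    have : (2 : ℕ) ^ t ∣ 2 ^ 2 := pow_dvd_pow 2 (by omega)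
    exact this.trans (by norm_num)
  have hprim : IsPrimitiveRoot w (orderOf w) := IsPrimitiveRoot.orderOf w
  have hmin := Polynomial.cyclotomic_eq_minpoly_rat hprim hd0
  have hdeg : (minpoly ℚ w).natDegree = (orderOf w).totient := by
    rw [← hmin, Polynomial.natDegree_cyclotomic]
  have htot : 4 ≤ (orderOf w).totient := by
    rw [hdt, Nat.totient_prime_pow Nat.prime_two (by omega : 0 < t)]
    have : (2 : ℕ) ^ 2 ≤ 2 ^ (t - 1) := Nat.pow_le_pow_right (by norm_num) (by omega)
    omega
  set p : Polynomial ℚ := Polynomial.X ^ 2 - Polynomial.C q * Polynomial.X + 1 with hp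
  have hroot : Polynomial.aeval w p = 0 := by
    simp only [hp, map_add, map_sub, map_mul, map_pow, Polynomial.aeval_X, Polynomial.aeval_C,
      map_one]
    have hinv : w * w⁻¹ = 1 := mul_inv_cancel₀ hw0
    have : w * (w + w⁻¹) = w * (q : ℂ) := by rw [hq]
    rw [eq_ratCast (algebraMap ℚ ℂ) q]
    linear_combination this - hinv
  have hpne : p ≠ 0 := by
    intro h
    have := congrArg (fun r => Polynomial.coeff r 2) h
    simp [hp, Polynomial.coeff_one] at this
  have hle := Polynomial.natDegree_le_of_dvd (minpoly.dvd ℚ w hroot) hpne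
  have hpdeg : p.natDegree ≤ 2 := by
    rw [hp]
    compute_degree
  omega

end Irrat

end QRatAux

namespace QRatAux

section Quat

open QuaternionGroup

variable {m : ℕ}

lemma q_inv_a (i : ZMod (2 * m)) : (a i : QuaternionGroup m)⁻¹ = a (-i) := by
  apply inv_eq_of_mul_eq_one_right
  rw [a_mul_a, add_neg_cancel, one_def]

lemma two_m_cast : ((m : ZMod (2 * m)) + m) = 0 := by
  have : (((2 * m : ℕ) : ZMod (2 * m))) = 0 := ZMod.natCast_self _
  push_cast at this
  linear_combination this

lemma q_inv_xa (i : ZMod (2 * m)) : (xa i : QuaternionGroup m)⁻¹ = xa ((m : ZMod (2 * m)) + i) := by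
  apply inv_eq_of_mul_eq_one_right
  rw [xa_mul_xa, one_def]
  congr 1
  have := two_m_cast (m := m)
  ring_nf
  linear_combination this

lemma conj_a_a (j i : ZMod (2 * m)) :
    (a j : QuaternionGroup m) * a i * (a j)⁻¹ = a i := by
  rw [q_inv_a, a_mul_a, a_mul_a]; ring_nf

lemma conj_xa_a (j i : ZMod (2 * m)) :
    (xa j : QuaternionGroup m) * a i * (xa j)⁻¹ = a (-i) := by
  rw [q_inv_xa, xa_mul_a, xa_mul_xa]
  congr 1
  have := two_m_cast (m := m)
  linear_combination this

lemma conj_a_xa (j i : ZMod (2 * m)) :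
    (a j : QuaternionGroup m) * xa i * (a j)⁻¹ = xa (i - 2 * j) := by
  rw [q_inv_a, a_mul_xa, xa_mul_a]
  congr 1; ring

lemma conj_xa_xa (j i : ZMod (2 * m)) :
    (xa j : QuaternionGroup m) * xa i * (xa j)⁻¹ = xa (2 * j - i) := by
  rw [q_inv_xa, xa_mul_xa, a_mul_xa]
  congr 1
  ring_nf

lemma isConj_a_neg (i : ZMod (2 * m)) :
    IsConj (a i : QuaternionGroup m) (a (-i)) :=
  isConj_iff.mpr ⟨xa 0, conj_xa_a 0 i⟩

lemma isConj_xa_add_two (i j : ZMod (2 * m)) :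
    IsConj (xa i : QuaternionGroup m) (xa (i + 2 * j)) := by
  refine isConj_iff.mpr ⟨a (-j), ?_⟩
  rw [conj_a_xa]
  congr 1; ring

lemma isConj_a_cases {i : ZMod (2 * m)} {y : QuaternionGroup m}
    (h : IsConj (a i) y) : y = a i ∨ y = a (-i) := by
  obtain ⟨g, hg⟩ := isConj_iff.mp h
  rcases g with j | j
  · left; rw [← hg, conj_a_a]
  · right; rw [← hg, conj_xa_a]

lemma isConj_xa_cases {i : ZMod (2 * m)} {y : QuaternionGroup m}
    (h : IsConj (xa i) y) : ∃ j, y = xa (i + 2 * j) := by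
  obtain ⟨g, hg⟩ := isConj_iff.mp h
  rcases g with j | j
  · exact ⟨-j, by rw [← hg, conj_a_xa]; ring_nf⟩
  · exact ⟨j - i, by rw [← hg, conj_xa_xa]; ring_nf⟩

lemma parity_cases [NeZero m] (i : ZMod (2 * m)) :
    ∃ j : ZMod (2 * m), i = 2 * j ∨ i = 1 + 2 * j := by
  haveI : NeZero (2 * m) := ⟨by have := NeZero.ne m; omega⟩
  have hi : ((i.val : ℕ) : ZMod (2 * m)) = i := ZMod.natCast_rightInverse i
  rcases Nat.even_or_odd i.val with ⟨t, ht⟩ | ⟨t, ht⟩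
  · exact ⟨(t : ZMod (2 * m)), Or.inl (by rw [← hi, ht]; push_cast; ring)⟩
  · exact ⟨(t : ZMod (2 * m)), Or.inr (by rw [← hi, ht]; push_cast; ring)⟩

lemma central_a_m : ∀ g : QuaternionGroup m, (a m : QuaternionGroup m) * g = g * a m := by
  intro g
  rcases g with j | j
  · rw [a_mul_a, a_mul_a, add_comm]
  · rw [a_mul_xa, xa_mul_a]
    congr 1
    have := two_m_cast (m := m)
    linear_combination -this

lemma sq_a_m : (a m : QuaternionGroup m) * a m = 1 := by
  rw [a_mul_a, one_def]
  exact congrArg a (two_m_cast (m := m))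

lemma sq_xa (i : ZMod (2 * m)) : (xa i : QuaternionGroup m) * xa i = a m := by
  rw [xa_mul_xa]; congr 1; ring

end Quat

end QRatAux


namespace QRatAux

section Rep2

open QuaternionGroup

variable (m : ℕ)

/-- A primitive `2m`-th root of unity. -/
noncomputable def zeta : ℂ := Complex.exp (2 * Real.pi * Complex.I / ((2 * m : ℕ) : ℂ))

variable [NeZero m]

lemma neZero_two_mul : NeZero (2 * m) := ⟨by have := NeZero.ne m; omega⟩

lemma zeta_prim : IsPrimitiveRoot (zeta m) (2 * m) :=
  Complex.isPrimitiveRoot_exp (2 * m) (by have := NeZero.ne m; omega)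

lemma zeta_pow_mod (a : ℕ) : zeta m ^ (a % (2 * m)) = zeta m ^ a := by
  conv_rhs => rw [← Nat.div_add_mod a (2 * m)]
  rw [pow_add, pow_mul, (zeta_prim m).pow_eq_one, one_pow, one_mul]

/-- The basic character `ZMod (2m) → ℂ`, `i ↦ ζ^i`. -/
noncomputable def uu (i : ZMod (2 * m)) : ℂ := zeta m ^ i.val

lemma uu_ne_zero (i : ZMod (2 * m)) : uu m i ≠ 0 :=
  pow_ne_zero _ (Complex.exp_ne_zero _)

lemma uu_add (i j : ZMod (2 * m)) : uu m (i + j) = uu m i * uu m j := by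
  haveI := neZero_two_mul m
  rw [uu, uu, uu, ZMod.val_add, zeta_pow_mod, pow_add]

lemma uu_zero : uu m 0 = 1 := by
  haveI := neZero_two_mul m
  rw [uu, ZMod.val_zero, pow_zero]

lemma uu_neg (i : ZMod (2 * m)) : uu m (-i) = (uu m i)⁻¹ := by
  apply eq_inv_of_mul_eq_one_left
  rw [← uu_add, neg_add_cancel, uu_zero]

lemma uu_sub (i j : ZMod (2 * m)) : uu m (i - j) = uu m i * (uu m j)⁻¹ := by
  rw [sub_eq_add_neg, uu_add, uu_neg]

lemma uu_natCast (a : ℕ) (ha : a < 2 * m) : uu m (a : ZMod (2 * m)) = zeta m ^ a := by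
  rw [uu, ZMod.val_cast_of_lt ha]

lemma uu_m : uu m ((m : ℕ) : ZMod (2 * m)) = -1 := by
  rw [uu_natCast m m (by have := NeZero.ne m; omega)]
  have h2 : (zeta m ^ m) * (zeta m ^ m) = 1 := by
    rw [← pow_add]
    have : m + m = 2 * m := by ring
    rw [this, (zeta_prim m).pow_eq_one]
  rcases mul_self_eq_one_iff.mp h2 with h | h
  · exact absurd h ((zeta_prim m).pow_ne_one_of_pos_of_lt (by have := NeZero.ne m; omega)
      (by have := NeZero.ne m; omega))
  · exact h

lemma uu_sq_one : uu m 1 * uu m 1 ≠ 1 → True := fun _ => trivial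

/-- The matrices of the standard faithful 2-dimensional representation. -/
noncomputable def qmat : QuaternionGroup m → Matrix (Fin 2) (Fin 2) ℂ
  | .a i => !![uu m i, 0; 0, (uu m i)⁻¹]
  | .xa i => !![0, (uu m i)⁻¹; -(uu m i), 0]

lemma qmat_a (i : ZMod (2 * m)) : qmat m (a i) = !![uu m i, 0; 0, (uu m i)⁻¹] := rfl

lemma qmat_xa (i : ZMod (2 * m)) : qmat m (xa i) = !![0, (uu m i)⁻¹; -(uu m i), 0] := rfl

lemma qmat_mul (g h : QuaternionGroup m) : qmat m (g * h) = qmat m g * qmat m h := by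
    have hne := uu_ne_zero m
    rcases g with i | i <;> rcases h with j | j
    · rw [a_mul_a, qmat_a, qmat_a, qmat_a, Matrix.mul_fin_two, uu_add, mul_inv]
      norm_num
    · rw [a_mul_xa, qmat_xa, qmat_a, qmat_xa, Matrix.mul_fin_two, uu_sub, mul_inv, inv_inv]
      congr 1 <;> ring
    · rw [xa_mul_a, qmat_xa, qmat_a, qmat_xa, Matrix.mul_fin_two, uu_add, mul_inv]
      congr 1 <;> ring
    · rw [xa_mul_xa, qmat_xa, qmat_xa, qmat_a, Matrix.mul_fin_two]
      have h1 : uu m ((m : ZMod (2 * m)) + j - i) = -(uu m j * (uu m i)⁻¹) := by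
        rw [uu_sub, uu_add, uu_m]; ring
      rw [h1, inv_neg, mul_inv, inv_inv]
      congr 1 <;> ring

/-- The standard 2-dimensional representation as a monoid hom to matrices. -/
noncomputable def qhom : QuaternionGroup m →* Matrix (Fin 2) (Fin 2) ℂ where
  toFun := qmat m
  map_one' := by
    rw [one_def, qmat_a, uu_zero, inv_one, Matrix.one_fin_two]
  map_mul' := qmat_mul m

/-- The standard 2-dimensional representation. -/
noncomputable def qrep : Representation ℂ (QuaternionGroup m) (Fin 2 → ℂ) :=
  (Matrix.toLinAlgEquiv' : Matrix (Fin 2) (Fin 2) ℂ ≃ₐ[ℂ] _).toRingEquiv.toRingHom.toMonoidHom.comp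
    (qhom m)

lemma qrep_apply (g : QuaternionGroup m) : qrep m g = Matrix.toLin' (qmat m g) := rfl

lemma qrep_apply_vec (g : QuaternionGroup m) (v : Fin 2 → ℂ) :
    qrep m g v = (qmat m g).mulVec v := by
  rw [qrep_apply, Matrix.toLin'_apply]

/-- The standard 2-dimensional representation, as an `FDRep`. -/
noncomputable def V2 : FDRep ℂ (QuaternionGroup m) := FDRep.of (qrep m)

lemma V2_char (g : QuaternionGroup m) : (V2 m).character g = (qmat m g).trace := by
  show LinearMap.trace ℂ (Fin 2 → ℂ) (qrep m g) = _
  rw [qrep_apply, LinearMap.trace_eq_matrix_trace ℂ (Pi.basisFun ℂ (Fin 2)),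
    LinearMap.toMatrix_eq_toMatrix', LinearMap.toMatrix'_toLin']

lemma V2_char_a (i : ZMod (2 * m)) :
    (V2 m).character (a i) = uu m i + (uu m i)⁻¹ := by
  rw [V2_char, qmat_a, Matrix.trace_fin_two]
  norm_num

/-- Any nonzero invariant subspace of the 2-dimensional representation is everything. -/
lemma qrep_top (hm : 2 ≤ m) (U : Submodule ℂ (Fin 2 → ℂ))
    (hU : ∀ (g : QuaternionGroup m) (v : Fin 2 → ℂ), v ∈ U → qrep m g v ∈ U)
    (hne : U ≠ ⊥) : U = ⊤ := by
  obtain ⟨v, hv, hv0⟩ := (Submodule.ne_bot_iff U).mp hne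
  have hx0 : ∀ w : Fin 2 → ℂ, w ∈ U → (![w 1, -(w 0)] : Fin 2 → ℂ) ∈ U := by
    intro w hw
    have := hU (xa 0) w hw
    rw [qrep_apply_vec, qmat_xa, uu_zero, inv_one] at this
    convert this using 1
    funext p
    fin_cases p <;> simp [Matrix.mulVec, dotProduct, Fin.sum_univ_two]
  -- both basis vectors lie in U
  have he : (![1, 0] : Fin 2 → ℂ) ∈ U ∧ (![0, 1] : Fin 2 → ℂ) ∈ U := by
    have key : (![1, 0] : Fin 2 → ℂ) ∈ U ∨ (![0, 1] : Fin 2 → ℂ) ∈ U := by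
      by_cases hv1 : v 1 = 0
      · left
        have hv00 : v 0 ≠ 0 := by
          intro h0
          apply hv0
          funext p; fin_cases p <;> simp [h0, hv1]
        have : (v 0)⁻¹ • v ∈ U := Submodule.smul_mem U _ hv
        convert this using 1
        funext p; fin_cases p <;> simp [hv1, inv_mul_cancel₀ hv00]
      · right
        set w : Fin 2 → ℂ := uu m 1 • v - qrep m (a 1) v with hw
        have hwU : w ∈ U := Submodule.sub_mem U (Submodule.smul_mem U _ hv) (hU _ _ hv)
        have hw0 : w 0 = 0 := by
          rw [hw]
          simp [qrep_apply_vec, qmat_a, Matrix.mulVec, dotProduct, Fin.sum_univ_two]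
        have hw1 : w 1 = (uu m 1 - (uu m 1)⁻¹) * v 1 := by
          rw [hw]
          simp [qrep_apply_vec, qmat_a, Matrix.mulVec, dotProduct, Fin.sum_univ_two]
          ring
        have hu1 : uu m 1 - (uu m 1)⁻¹ ≠ 0 := by
          intro h
          have h1 : uu m 1 * uu m 1 = 1 := by
            have := uu_ne_zero m 1
            field_simp at h
            linear_combination h
          have hu1z : uu m 1 = zeta m := by
            rw [← Nat.cast_one (R := ZMod (2 * m)), uu_natCast m 1 (by omega), pow_one]
          have : zeta m ^ 2 = 1 := by rw [← h1, hu1z]; ring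
          exact (zeta_prim m).pow_ne_one_of_pos_of_lt (by omega) (by omega) this
        have hw1' : w 1 ≠ 0 := by rw [hw1]; exact mul_ne_zero hu1 hv1
        have : (w 1)⁻¹ • w ∈ U := Submodule.smul_mem U _ hwU
        convert this using 1
        funext p; fin_cases p <;> simp [hw0, inv_mul_cancel₀ hw1']
    rcases key with h | h
    · refine ⟨h, ?_⟩
      have h3 := Submodule.neg_mem U (hx0 _ h)
      have heq : (![0, 1] : Fin 2 → ℂ) =
          -(![(![1, 0] : Fin 2 → ℂ) 1, -(![1, 0] : Fin 2 → ℂ) 0]) := by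
        funext p; fin_cases p <;> simp
      rw [heq]; exact h3
    · refine ⟨?_, h⟩
      have h3 := hx0 _ h
      have heq : (![1, 0] : Fin 2 → ℂ) =
          ![(![0, 1] : Fin 2 → ℂ) 1, -(![0, 1] : Fin 2 → ℂ) 0] := by
        funext p; fin_cases p <;> simp
      rw [heq]; exact h3
  rw [Submodule.eq_top_iff']
  intro x
  have : x = x 0 • (![1, 0] : Fin 2 → ℂ) + x 1 • (![0, 1] : Fin 2 → ℂ) := by
    funext p; fin_cases p <;> simp
  rw [this]
  exact Submodule.add_mem U (Submodule.smul_mem U _ he.1) (Submodule.smul_mem U _ he.2)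

lemma V2_ne_zero_vec : (![1, 0] : Fin 2 → ℂ) ≠ 0 := by
  intro h
  have := congrFun h 0
  simp at this

lemma V2_simple (hm : 2 ≤ m) : Simple (V2 m) := by
  constructor
  intro W f hmono
  constructor
  · intro hiso hf0
    subst hf0
    have h1 : inv (0 : W ⟶ V2 m) ≫ (0 : W ⟶ V2 m) = 𝟙 (V2 m) := IsIso.inv_hom_id _
    rw [Limits.comp_zero] at h1
    have h2 := congrArg Action.Hom.hom h1
    rw [Action.zero_hom, Action.id_hom] at h2
    have h3 : (0 : (Fin 2 → ℂ) →ₗ[ℂ] (Fin 2 → ℂ)) = LinearMap.id := congrArg (fun f => f.hom.hom) h2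
    have h4 := LinearMap.congr_fun h3 ![1, 0]
    simp only [LinearMap.zero_apply, LinearMap.id_apply] at h4
    exact V2_ne_zero_vec h4.symm
  · intro hf0
    have hcomm : ∀ (g : QuaternionGroup m) (w : W), f.hom (W.ρ g w) = qrep m g (f.hom w) :=
      fun g w => LinearMap.congr_fun (congrArg (fun f => f.hom.hom) (f.comm g)) w
    -- injectivity
    have hinj : Function.Injective (f.hom.hom.hom : W →ₗ[ℂ] (Fin 2 → ℂ)) := by
      set K := LinearMap.ker (f.hom.hom.hom : W →ₗ[ℂ] (Fin 2 → ℂ)) with hK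
      have hKinv : ∀ g : QuaternionGroup m, ∀ x ∈ K, (W.ρ g) x ∈ K := by
        intro g x hx
        have hx0 : f.hom x = 0 := hx
        show f.hom ((W.ρ g) x) = 0
        rw [hcomm, hx0]; exact map_zero _
      let σ : Representation ℂ (QuaternionGroup m) K :=
        { toFun := fun g => (W.ρ g).restrict (hKinv g)
          map_one' := by
            ext x
            simp [LinearMap.restrict_apply]
          map_mul' := by
            intro g h
            ext x
            show (((W.ρ (g * h)).restrict (hKinv (g * h))) x : (W : Type)) =
              (((W.ρ g).restrict (hKinv g)) (((W.ρ h).restrict (hKinv h)) x) : (W : Type))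
            rw [LinearMap.restrict_coe_apply, LinearMap.restrict_coe_apply,
              LinearMap.restrict_coe_apply, map_mul, Module.End.mul_apply] }
      let KV : FDRep ℂ (QuaternionGroup m) := FDRep.of σ
      let ι : KV ⟶ W := ⟨FGModuleCat.ofHom (Submodule.subtype K : K →ₗ[ℂ] W), by intro g; rfl⟩
      have hι0 : ι ≫ f = 0 := by
        apply Action.Hom.ext
        rw [Action.comp_hom, Action.zero_hom]
        ext x
        exact x.2
      have hι := (Preadditive.mono_iff_cancel_zero f).mp hmono KV ι hι0
      have hKbot : ∀ x ∈ K, x = (0 : W) := by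
        intro x hx
        have := congrArg Action.Hom.hom hι
        rw [Action.zero_hom] at this
        exact LinearMap.congr_fun (congrArg (fun f => f.hom.hom) this) ⟨x, hx⟩
      have hKb : LinearMap.ker (f.hom.hom.hom : W →ₗ[ℂ] (Fin 2 → ℂ)) = ⊥ := by
        rw [Submodule.eq_bot_iff]
        exact hKbot
      exact LinearMap.ker_eq_bot.mp hKb
    -- surjectivity
    have hsurj : Function.Surjective (f.hom.hom.hom : W →ₗ[ℂ] (Fin 2 → ℂ)) := by
      have hRinv : ∀ (g : QuaternionGroup m) (v : Fin 2 → ℂ),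
          v ∈ LinearMap.range (f.hom.hom.hom : W →ₗ[ℂ] (Fin 2 → ℂ)) →
          qrep m g v ∈ LinearMap.range (f.hom.hom.hom : W →ₗ[ℂ] (Fin 2 → ℂ)) := by
        rintro g v ⟨w, rfl⟩
        exact ⟨W.ρ g w, (hcomm g w)⟩
      have hR0 : LinearMap.range (f.hom.hom.hom : W →ₗ[ℂ] (Fin 2 → ℂ)) ≠ ⊥ := by
        intro h
        apply hf0
        apply Action.Hom.ext
        rw [Action.zero_hom]
        apply FGModuleCat.hom_ext
        exact LinearMap.range_eq_bot.mp h
      have := qrep_top m hm _ hRinv hR0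
      rw [← LinearMap.range_eq_top]
      exact this
    -- build the inverse
    let e : (W : Type) ≃ₗ[ℂ] (Fin 2 → ℂ) := LinearEquiv.ofBijective f.hom.hom.hom ⟨hinj, hsurj⟩
    have hfe : ∀ x : W, e x = f.hom x := fun x => rfl
    let ginv : V2 m ⟶ W :=
      ⟨FGModuleCat.ofHom (e.symm : (Fin 2 → ℂ) →ₗ[ℂ] W), by
        intro g
        apply FGModuleCat.hom_ext
        show (e.symm.toLinearMap).comp ((V2 m).ρ g) = (W.ρ g).comp e.symm.toLinearMap
        ext v
        apply hinj
        show f.hom (e.symm (qrep m g v)) = f.hom (W.ρ g (e.symm v))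
        rw [hcomm, ← hfe, ← hfe, e.apply_symm_apply]; exact congrArg _ (e.apply_symm_apply v).symm⟩
    refine ⟨⟨ginv, ?_, ?_⟩⟩
    · apply Action.Hom.ext
      rw [Action.comp_hom, Action.id_hom]
      ext x
      show e.symm (f.hom x) = x
      rw [← hfe, e.symm_apply_apply]
    · apply Action.Hom.ext
      rw [Action.comp_hom, Action.id_hom]
      ext v
      show f.hom (e.symm v) = v
      rw [← hfe]; exact e.apply_symm_apply v

end Rep2

end QRatAux

namespace QRatAux

section Irrat2

open QuaternionGroup

lemma not_isRatElem_a (m : ℕ) [NeZero m] (hm : 2 ≤ m) (j : ℕ) (hj : 2 * m = 2 ^ j)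
    {i : ZMod (2 * m)} (hi : (4 : ZMod (2 * m)) * i ≠ 0) :
    ¬ IsRatElem (QuaternionGroup.a i) := by
  intro h
  obtain ⟨q, hq⟩ := h ((V2 m).character) ⟨V2 m, V2_simple m hm, fun _ => rfl⟩
  rw [V2_char_a] at hq
  refine irrational_aux (uu m i) j ?_ ?_ q hq
  · rw [← hj, uu]
    calc (zeta m ^ i.val) ^ (2 * m) = (zeta m ^ (2 * m)) ^ i.val := by
          rw [← pow_mul, ← pow_mul, mul_comm]
    _ = 1 := by rw [(zeta_prim m).pow_eq_one, one_pow]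
  · intro h4
    apply hi
    have h5 : zeta m ^ (i.val * 4) = 1 := by
      rw [pow_mul]
      exact h4
    have hdvd : 2 * m ∣ i.val * 4 := ((zeta_prim m).pow_eq_one_iff_dvd _).mp h5
    have h6 : ((i.val * 4 : ℕ) : ZMod (2 * m)) = 0 :=
      (ZMod.natCast_eq_zero_iff _ _).mpr hdvd
    rw [Nat.cast_mul, ZMod.natCast_rightInverse i] at h6
    simpa [mul_comm] using h6

end Irrat2

end QRatAux

open QRatAux QuaternionGroup in
/-- For `n ≥ 2`, the generalized quaternion group of order `2 ^ (n + 1)` has exactly 5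
rational conjugacy classes. -/
theorem quaternion_five_rational_classes (n : ℕ) (hn : 2 ≤ n) :
    Nat.card {c : ConjClasses (QuaternionGroup (2 ^ (n - 1))) // IsRatClass c} = 5 := by
  set m : ℕ := 2 ^ (n - 1) with hm
  haveI : NeZero m := ⟨pow_ne_zero _ (by norm_num)⟩
  set h : ℕ := 2 ^ (n - 2) with hh
  have h2h : 2 * h = m := by
    rw [hh, hm, mul_comm, ← pow_succ]
    congr 1
    omega
  have hm2 : 2 ≤ m := by
    calc (2 : ℕ) = 2 ^ 1 := rfl
    _ ≤ 2 ^ (n - 1) := Nat.pow_le_pow_right (by norm_num) (by omega)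
  have hj : 2 * m = 2 ^ n := by
    rw [hm, mul_comm, ← pow_succ]
    congr 1
    omega
  have hpos : 0 < h := by positivity
  -- elements of `ZMod (2 * m)`
  set im : ZMod (2 * m) := ((m : ℕ) : ZMod (2 * m)) with him
  set ih : ZMod (2 * m) := ((h : ℕ) : ZMod (2 * m)) with hih
  have F2 : ih + ih = im := by
    rw [hih, him, ← Nat.cast_add]
    congr 1
    omega
  have F3 : im + im = 0 := two_m_cast
  have F4 : ih ≠ 0 := by
    intro h0
    have := (ZMod.natCast_eq_zero_iff h (2 * m)).mp h0
    have := Nat.le_of_dvd hpos this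
    omega
  have F5 : im ≠ 0 := by
    intro h0
    have := (ZMod.natCast_eq_zero_iff m (2 * m)).mp h0
    have := Nat.le_of_dvd (by omega) this
    omega
  have F6 : ih ≠ im := by
    intro h0
    rw [hih, him] at h0
    have := congrArg ZMod.val h0
    rw [ZMod.val_cast_of_lt (by omega), ZMod.val_cast_of_lt (by omega)] at this
    omega
  have F7 : -ih = ih + im := by linear_combination -F2 - F3
  have F10 : im = 2 * ih := by linear_combination -F2
  have F11 : ∀ jz : ZMod (2 * m), 2 * jz ≠ 1 := by
    intro jz hjz
    have hdvd : (2 : ℕ) ∣ 2 * m := ⟨m, rfl⟩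
    have := congrArg (ZMod.castHom hdvd (ZMod 2)) hjz
    rw [map_mul, map_one, map_ofNat] at this
    have h2 : ((2 : ZMod 2)) = 0 := by decide
    rw [h2, zero_mul] at this
    exact absurd this (by decide)
  have hclass : ∀ i : ZMod (2 * m), 4 * i = 0 →
      i = 0 ∨ i = ih ∨ i = im ∨ i = ih + im := by
    intro i hi4
    have hival : ((i.val : ℕ) : ZMod (2 * m)) = i := ZMod.natCast_rightInverse i
    have h1 : ((4 * i.val : ℕ) : ZMod (2 * m)) = 0 := by
      rw [Nat.cast_mul, hival]
      rw [show ((4 : ℕ) : ZMod (2 * m)) = (4 : ZMod (2 * m)) by norm_num]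
      exact hi4
    have hdvd : 2 * m ∣ 4 * i.val := (ZMod.natCast_eq_zero_iff _ _).mp h1
    have hlt : i.val < 2 * m := ZMod.val_lt i
    have hdvd2 : h ∣ i.val := by
      have h4h : 4 * h = 2 * m := by omega
      have : 4 * h ∣ 4 * i.val := by rwa [h4h]
      exact (mul_dvd_mul_iff_left (by norm_num : (4 : ℕ) ≠ 0)).mp this
    obtain ⟨t, ht⟩ := hdvd2
    have ht4 : t < 4 := by nlinarith
    interval_cases t
    · left; rw [← hival, ht]; simp
    · right; left; rw [← hival, ht, hih]; congr 1; omega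
    · right; right; left; rw [← hival, ht, him]; congr 1; omega
    · right; right; right
      rw [← hival, ht, show h * 3 = h + m by omega, hih, him]
      push_cast
      ring
  -- group facts
  have hcent : ∀ g : QuaternionGroup m, (a im) * g = g * a im := central_a_m
  have hsqz : (a im : QuaternionGroup m) * a im = 1 := sq_a_m
  have hsqh : (a ih : QuaternionGroup m) * a ih = a im := by rw [a_mul_a, F2]
  have hconjh : IsConj (a ih : QuaternionGroup m) (a ih * a im) := by
    rw [a_mul_a, ← F7]
    exact isConj_a_neg ih
  have hconjxa : ∀ i : ZMod (2 * m), IsConj (xa i : QuaternionGroup m) (xa i * a im) := by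
    intro i
    rw [xa_mul_a, F10]
    exact isConj_xa_add_two i ih
  -- the five rational elements
  have r1 : IsRatElem (1 : QuaternionGroup m) := isRatElem_one
  have rz : IsRatElem (a im : QuaternionGroup m) := isRatElem_central_invol hcent hsqz
  have rh : IsRatElem (a ih : QuaternionGroup m) :=
    isRatElem_of_sq_central hcent hsqz hsqh hconjh
  have rx : ∀ i : ZMod (2 * m), IsRatElem (xa i : QuaternionGroup m) := fun i =>
    isRatElem_of_sq_central hcent hsqz (sq_xa i) (hconjxa i)
  -- rational classes
  have mkRat : ∀ x : QuaternionGroup m, IsRatElem x → IsRatClass (ConjClasses.mk x) := by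
    intro x hx y hy
    rw [ConjClasses.mem_carrier_iff_mk_eq, ConjClasses.mk_eq_mk_iff_isConj] at hy
    exact isRatElem_of_isConj hy.symm hx
  set c0 := ConjClasses.mk (1 : QuaternionGroup m) with hc0
  set c1 := ConjClasses.mk (a im : QuaternionGroup m) with hc1
  set c2 := ConjClasses.mk (a ih : QuaternionGroup m) with hc2
  set c3 := ConjClasses.mk (xa 0 : QuaternionGroup m) with hc3
  set c4 := ConjClasses.mk (xa 1 : QuaternionGroup m) with hc4
  -- forward classification
  have hforward : ∀ c : ConjClasses (QuaternionGroup m), IsRatClass c →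
      c = c0 ∨ c = c1 ∨ c = c2 ∨ c = c3 ∨ c = c4 := by
    intro c hc
    obtain ⟨x, hx⟩ := ConjClasses.exists_rep c
    rcases x with i | i
    · have hel : IsRatElem (a i : QuaternionGroup m) :=
        hc (a i) (ConjClasses.mem_carrier_iff_mk_eq.mpr hx)
      have h4i : 4 * i = 0 := by
        by_contra h4
        exact not_isRatElem_a m hm2 n hj h4 hel
      rcases hclass i h4i with rfl | rfl | rfl | rfl
      · left; rw [← hx, hc0, ← one_def]
      · right; right; left; rw [← hx, hc2]
      · right; left; rw [← hx, hc1]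
      · right; right; left
        rw [← hx, hc2, ConjClasses.mk_eq_mk_iff_isConj, ← F7]
        exact (isConj_a_neg ih).symm
    · obtain ⟨jz, hp⟩ := parity_cases i
      rcases hp with hpe | hpo
      · right; right; right; left
        rw [← hx, hc3, ConjClasses.mk_eq_mk_iff_isConj, hpe]
        have hcj := isConj_xa_add_two (0 : ZMod (2 * m)) jz
        rw [zero_add] at hcj
        exact hcj.symm
      · right; right; right; right
        rw [← hx, hc4, ConjClasses.mk_eq_mk_iff_isConj, hpo]
        exact (isConj_xa_add_two 1 jz).symm
  -- distinctness
  have hneg0 : -(0 : ZMod (2 * m)) = 0 := neg_zero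
  have ne01 : c0 ≠ c1 := by
    rw [hc0, hc1, one_def, Ne, ConjClasses.mk_eq_mk_iff_isConj]
    intro hcj
    rcases isConj_a_cases hcj with h' | h'
    · injection h' with h''; exact F5 h''
    · rw [hneg0] at h'; injection h' with h''; exact F5 h''
  have ne02 : c0 ≠ c2 := by
    rw [hc0, hc2, one_def, Ne, ConjClasses.mk_eq_mk_iff_isConj]
    intro hcj
    rcases isConj_a_cases hcj with h' | h'
    · injection h' with h''; exact F4 h''
    · rw [hneg0] at h'; injection h' with h''; exact F4 h''
  have ne03 : c0 ≠ c3 := by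
    rw [hc0, hc3, one_def, Ne, ConjClasses.mk_eq_mk_iff_isConj]
    intro hcj
    rcases isConj_a_cases hcj with h' | h' <;> exact nomatch h'
  have ne04 : c0 ≠ c4 := by
    rw [hc0, hc4, one_def, Ne, ConjClasses.mk_eq_mk_iff_isConj]
    intro hcj
    rcases isConj_a_cases hcj with h' | h' <;> exact nomatch h'
  have hnegm : -im = im := by linear_combination -F3
  have ne12 : c1 ≠ c2 := by
    rw [hc1, hc2, Ne, ConjClasses.mk_eq_mk_iff_isConj]
    intro hcj
    rcases isConj_a_cases hcj with h' | h'
    · injection h' with h''; exact F6 h''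
    · rw [hnegm] at h'; injection h' with h''; exact F6 h''
  have ne13 : c1 ≠ c3 := by
    rw [hc1, hc3, Ne, ConjClasses.mk_eq_mk_iff_isConj]
    intro hcj
    rcases isConj_a_cases hcj with h' | h' <;> exact nomatch h'
  have ne14 : c1 ≠ c4 := by
    rw [hc1, hc4, Ne, ConjClasses.mk_eq_mk_iff_isConj]
    intro hcj
    rcases isConj_a_cases hcj with h' | h' <;> exact nomatch h'
  have ne23 : c2 ≠ c3 := by
    rw [hc2, hc3, Ne, ConjClasses.mk_eq_mk_iff_isConj]
    intro hcj
    rcases isConj_a_cases hcj with h' | h' <;> exact nomatch h'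
  have ne24 : c2 ≠ c4 := by
    rw [hc2, hc4, Ne, ConjClasses.mk_eq_mk_iff_isConj]
    intro hcj
    rcases isConj_a_cases hcj with h' | h' <;> exact nomatch h'
  have ne34 : c3 ≠ c4 := by
    rw [hc3, hc4, Ne, ConjClasses.mk_eq_mk_iff_isConj]
    intro hcj
    obtain ⟨jz, h'⟩ := isConj_xa_cases hcj
    injection h' with h''
    rw [zero_add] at h''
    exact F11 jz h''.symm
  -- the set of rational classes
  have hset : {c : ConjClasses (QuaternionGroup m) | IsRatClass c} =
      ({c0, c1, c2, c3, c4} : Set (ConjClasses (QuaternionGroup m))) := by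
    ext c
    simp only [Set.mem_setOf_eq, Set.mem_insert_iff, Set.mem_singleton_iff]
    constructor
    · exact hforward c
    · rintro (rfl | rfl | rfl | rfl | rfl)
      · exact mkRat 1 r1
      · exact mkRat _ rz
      · exact mkRat _ rh
      · exact mkRat _ (rx 0)
      · exact mkRat _ (rx 1)
  have hcard : Nat.card {c : ConjClasses (QuaternionGroup m) // IsRatClass c} =
      ({c0, c1, c2, c3, c4} : Set (ConjClasses (QuaternionGroup m))).ncard := by
    rw [← Nat.card_coe_set_eq, ← hset]
    exact Nat.card_congr (Equiv.subtypeEquivRight (fun c => Iff.rfl))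
  rw [hcard]
  rw [Set.ncard_insert_of_notMem (by
        simp only [Set.mem_insert_iff, Set.mem_singleton_iff, not_or]
        exact ⟨ne01, ne02, ne03, ne04⟩) (Set.toFinite _),
      Set.ncard_insert_of_notMem (by
        simp only [Set.mem_insert_iff, Set.mem_singleton_iff, not_or]
        exact ⟨ne12, ne13, ne14⟩) (Set.toFinite _),
      Set.ncard_insert_of_notMem (by
        simp only [Set.mem_insert_iff, Set.mem_singleton_iff, not_or]
        exact ⟨ne23, ne24⟩) (Set.toFinite _),
      Set.ncard_insert_of_notMem (by
        simp only [Set.mem_singleton_iff]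
        exact ne34) (Set.toFinite _),
      Set.ncard_singleton]
end
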